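/- arXiv:1008.0305 — 6 statements merged into one kernel-verified Lean document; each statement's English description precedes it below -/
import Mathlib

section
/- Let p be a prime, let A be a commutative ring with pA = 0 equipped with a proper pseudovaluation ν, and let ε > 0. Then the Gauss norm γ_ε is a pseudovaluation on the ring W(A) of p-typical Witt vectors: γ_ε(0) = ∞, γ_ε(1) = 0, γ_ε(ξ ± η) ≥ min(γ_ε(ξ), γ_ε(η)) for all ξ, η ∈ W(A), and γ_ε(ξη) ≥ γ_ε(ξ) + γ_ε(η) whenever γ_ε(ξ) ≠ −∞ and γ_ε(η) ≠ −∞. In particular, the set W^ε(A) of Witt vectors with radius of convergence ε is a subring of W(A). -/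
open scoped Classical

noncomputable section

/-- A pseudovaluation on a commutative ring `A`: a function `ν : A → ℝ ∪ {±∞}` with
`ν 0 = ∞`, `ν 1 = 0`, `ν (a - b) ≥ min (ν a) (ν b)`, and `ν (a*b) ≥ ν a + ν b`
whenever `ν a ≠ -∞` and `ν b ≠ -∞`. -/
structure IsPseudovaluation {A : Type*} [CommRing A] (ν : A → EReal) : Prop where
  map_zero : ν 0 = ⊤
  map_one : ν 1 = 0
  min_le_sub : ∀ a b : A, min (ν a) (ν b) ≤ ν (a - b)
  add_le_mul : ∀ a b : A, ν a ≠ ⊥ → ν b ≠ ⊥ → ν a + ν b ≤ ν (a * b)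

/-- A proper pseudovaluation never takes the value `-∞`. -/
def IsProperPV {A : Type*} [CommRing A] (ν : A → EReal) : Prop :=
  IsPseudovaluation ν ∧ ∀ a : A, ν a ≠ ⊥

/-- A negative pseudovaluation is proper and satisfies `ν a ≤ 0` for `a ≠ 0`. -/
def IsNegativePV {A : Type*} [CommRing A] (ν : A → EReal) : Prop :=
  IsPseudovaluation ν ∧ (∀ a : A, ν a ≠ ⊥) ∧ ∀ a : A, a ≠ 0 → ν a ≤ 0

/-- `f` is localizing with respect to `ν` if there are `C > 0`, `D ≥ 0` with
`ν (fⁿ x) ≤ C · ν x + n D` for all `n` and `x`. -/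
def IsLocalizing {A : Type*} [CommRing A] (ν : A → EReal) (f : A) : Prop :=
  ∃ C D : ℝ, 0 < C ∧ 0 ≤ D ∧ ∀ (n : ℕ) (x : A),
    ν (f ^ n * x) ≤ (C : EReal) * ν x + (((n : ℝ) * D : ℝ) : EReal)

/-- Two functions `A → ℝ ∪ {±∞}` are linearly equivalent if they dominate each other
up to positive multiplicative and nonnegative additive constants. -/
def LinearlyEquivalent {A : Type*} (ν₁ ν₂ : A → EReal) : Prop :=
  ∃ c₁ c₂ d₁ d₂ : ℝ, 0 < c₁ ∧ 0 < c₂ ∧ 0 ≤ d₁ ∧ 0 ≤ d₂ ∧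
    (∀ a : A, (c₂ : EReal) * ν₂ a - (d₂ : EReal) ≤ ν₁ a) ∧
    (∀ a : A, (c₁ : EReal) * ν₁ a - (d₁ : EReal) ≤ ν₂ a)

/-- The weighted degree pseudovaluation on a multivariate polynomial ring:
`ν (Σ_k c_k T^k) = inf_k { μ(c_k) - Σ_i k_i d_i }`. -/
def weightedDegPV {R : Type*} [CommRing R] (μ : R → EReal) {m : ℕ} (d : Fin m → ℝ)
    (f : MvPolynomial (Fin m) R) : EReal :=
  ⨅ k : Fin m →₀ ℕ, (μ (MvPolynomial.coeff k f) - ((∑ i, (k i : ℝ) * d i : ℝ) : EReal))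

/-- A pseudovaluation `τ` on an `R`-algebra `B` is admissible (relative to `μ` on `R`)
if it is the quotient of a weighted degree pseudovaluation under some surjection
from a polynomial ring. -/
def IsAdmissiblePV {R B : Type*} [CommRing R] [CommRing B] [Algebra R B]
    (μ : R → EReal) (τ : B → EReal) : Prop :=
  ∃ (m : ℕ) (π : MvPolynomial (Fin m) R →ₐ[R] B) (d : Fin m → ℝ),
    Function.Surjective π ∧ (∀ i, 0 < d i) ∧
    ∀ b : B, τ b = ⨆ (f : MvPolynomial (Fin m) R) (_ : π f = b), weightedDegPV μ d f

/-- The pseudovaluation `μ (Σ_i a_i X^i) = min_i { ν(a_i) - i·d }` on `A[X]`. -/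
def polyPV {A : Type*} [CommRing A] (ν : A → EReal) (d : ℝ) (g : Polynomial A) : EReal :=
  ⨅ i : ℕ, (ν (g.coeff i) - (((i : ℝ) * d : ℝ) : EReal))

/-- The induced pseudovaluation on the localization `A_f`: the quotient of `polyPV ν d`
under the map `A[X] → A_f`, `X ↦ f⁻¹`. -/
def locPV {A : Type*} [CommRing A] (ν : A → EReal) (f : A) (d : ℝ)
    (z : Localization.Away f) : EReal :=
  ⨆ (g : Polynomial A)
    (_ : Polynomial.aeval (IsLocalization.Away.invSelf (S := Localization.Away f) f) g = z),
    polyPV ν d g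

/-- The Gauss norm `γ_ε(α) = inf_i { i + ε p^{-i} ν(a_i) }` of a Witt vector. -/
def gaussNorm (p : ℕ) {A : Type*} [CommRing A] (ν : A → EReal) (ε : ℝ)
    (α : WittVector p A) : EReal :=
  ⨅ i : ℕ, ((i : EReal) + ((ε * (p : ℝ) ^ (-(i : ℤ)) : ℝ) : EReal) * ν (α.coeff i))

/-- A Witt vector is overconvergent if `γ_ε(α) ≠ -∞` for some `ε > 0`. -/
def IsOverconvergent (p : ℕ) {A : Type*} [CommRing A] (ν : A → EReal)
    (α : WittVector p A) : Prop :=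
  ∃ ε : ℝ, 0 < ε ∧ gaussNorm p ν ε α ≠ ⊥

/-- The trivial valuation on an integral domain: `ν 0 = ∞` and `ν a = 0` for `a ≠ 0`. -/
def trivialPV (K : Type*) [Zero K] : K → EReal :=
  fun a => if a = 0 then (⊤ : EReal) else 0

namespace GaussAux

variable {A : Type*} [CommRing A] {ν : A → EReal}

lemma pv_neg (hν : IsPseudovaluation ν) (a : A) : ν a ≤ ν (-a) := by
  have h := hν.min_le_sub 0 a
  rw [zero_sub, hν.map_zero] at h
  simpa using h

lemma pv_add (hν : IsPseudovaluation ν) (a b : A) : min (ν a) (ν b) ≤ ν (a + b) := by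
  have h := hν.min_le_sub a (-b)
  rw [sub_neg_eq_add] at h
  exact le_trans (min_le_min le_rfl (pv_neg hν b)) h

lemma pv_natCast (hν : IsPseudovaluation ν) : ∀ n : ℕ, (0 : EReal) ≤ ν (n : A)
  | 0 => by rw [Nat.cast_zero, hν.map_zero]; exact le_top
  | n + 1 => by
    have h := pv_add hν (n : A) 1
    rw [Nat.cast_add, Nat.cast_one]
    exact le_trans (le_min (pv_natCast hν n) (le_of_eq hν.map_one.symm)) h

lemma pv_intCast (hν : IsPseudovaluation ν) (m : ℤ) : (0 : EReal) ≤ ν (m : A) := by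
  obtain ⟨n, rfl | rfl⟩ := m.eq_nat_or_neg
  · rw [Int.cast_natCast]; exact pv_natCast hν n
  · rw [Int.cast_neg, Int.cast_natCast]
    exact le_trans (pv_natCast hν n) (pv_neg hν _)

lemma pv_pow (hν : IsPseudovaluation ν) (hproper : ∀ a : A, ν a ≠ ⊥) (a : A) :
    ∀ k : ℕ, k • ν a ≤ ν (a ^ k)
  | 0 => by rw [zero_smul, pow_zero, hν.map_one]
  | k + 1 => by
    rw [succ_nsmul, pow_succ]
    exact le_trans (add_le_add (pv_pow hν hproper a k) le_rfl)
      (hν.add_le_mul _ _ (hproper _) (hproper _))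

lemma pv_prod (hν : IsPseudovaluation ν) (hproper : ∀ a : A, ν a ≠ ⊥)
    {ι : Type*} (s : Finset ι) (f : ι → A) (d : ι → ℕ) :
    ∑ i ∈ s, (d i) • ν (f i) ≤ ν (∏ i ∈ s, f i ^ d i) := by
  classical
  induction s using Finset.induction with
  | empty => simp [hν.map_one]
  | @insert a s ha ih =>
    rw [Finset.sum_insert ha, Finset.prod_insert ha]
    exact le_trans (add_le_add (pv_pow hν hproper (f a) _) ih)
      (hν.add_le_mul _ _ (hproper _) (hproper _))

lemma pv_term (hν : IsPseudovaluation ν) (hproper : ∀ a : A, ν a ≠ ⊥) (m : ℤ) (x : A) :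
    ν x ≤ ν ((m : A) * x) := by
  refine le_trans ?_ (hν.add_le_mul _ _ (hproper _) (hproper _))
  calc ν x = 0 + ν x := by rw [zero_add]
  _ ≤ ν (m : A) + ν x := add_le_add (pv_intCast hν m) le_rfl

lemma pv_sum (hν : IsPseudovaluation ν) {ι : Type*} {s : Finset ι} {f : ι → A} {c : EReal}
    (h : ∀ i ∈ s, c ≤ ν (f i)) : c ≤ ν (∑ i ∈ s, f i) := by
  classical
  induction s using Finset.induction with
  | empty => simp only [Finset.sum_empty, hν.map_zero]; exact le_top
  | @insert a s ha ih =>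
    rw [Finset.sum_insert ha]
    refine le_trans (le_min (h a (Finset.mem_insert_self _ _)) ?_) (pv_add hν _ _)
    exact ih fun i hi => h i (Finset.mem_insert_of_mem hi)



def realToEReal : ℝ →+ EReal := ⟨⟨Real.toEReal, rfl⟩, EReal.coe_add⟩

lemma ereal_coe_sum {ι : Type*} (s : Finset ι) (g : ι → ℝ) :
    ((∑ i ∈ s, g i : ℝ) : EReal) = ∑ i ∈ s, ((g i : ℝ) : EReal) :=
  map_sum realToEReal g s

lemma ereal_nsmul_coe (k : ℕ) (r : ℝ) : k • ((r : ℝ) : EReal) = (((k : ℝ) * r : ℝ) : EReal) := by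
  rw [← EReal.coe_nsmul, nsmul_eq_mul]

lemma ereal_nsmul_ne_bot {x : EReal} (hx : x ≠ ⊥) (k : ℕ) : k • x ≠ ⊥ := by
  induction k with
  | zero => simp
  | succ k ih =>
    rw [succ_nsmul]
    simp only [ne_eq, EReal.add_eq_bot_iff]
    tauto

lemma ereal_nsmul_top {k : ℕ} (hk : k ≠ 0) : k • (⊤ : EReal) = ⊤ := by
  induction k with
  | zero => exact absurd rfl hk
  | succ k ih =>
    rcases Nat.eq_zero_or_pos k with h | h
    · subst h; simp
    · rw [succ_nsmul, ih h.ne', EReal.top_add_of_ne_bot]; simp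

lemma ereal_sum_ne_bot {ι : Type*} {s : Finset ι} {f : ι → EReal}
    (h : ∀ i ∈ s, f i ≠ ⊥) : (∑ i ∈ s, f i) ≠ ⊥ := by
  classical
  induction s using Finset.induction with
  | empty => simp
  | @insert a s ha ih =>
    rw [Finset.sum_insert ha]
    simp only [ne_eq, EReal.add_eq_bot_iff]
    push_neg
    exact ⟨h a (Finset.mem_insert_self _ _), ih fun i hi => h i (Finset.mem_insert_of_mem hi)⟩

lemma ereal_sum_eq_top {ι : Type*} {s : Finset ι} {f : ι → EReal}
    (h : ∀ i ∈ s, f i ≠ ⊥) {i0 : ι} (hi0 : i0 ∈ s) (htop : f i0 = ⊤) :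
    (∑ i ∈ s, f i) = ⊤ := by
  classical
  rw [← Finset.add_sum_erase _ _ hi0, htop, EReal.top_add_of_ne_bot]
  exact ereal_sum_ne_bot fun i hi => h i (Finset.mem_of_mem_erase hi)

lemma zpow_cancel {p : ℕ} (hp : 0 < p) (m : ℕ) : (p : ℝ) ^ (m : ℕ) * (p : ℝ) ^ (-(m : ℤ)) = 1 := by
  have hp0 : (p : ℝ) ≠ 0 := by positivity
  rw [← zpow_natCast (p : ℝ) m, ← zpow_add₀ hp0]
  simp

lemma key_numeric_add {p : ℕ} (hp : 0 < p) {ε : ℝ} (hε : 0 < ε) {c : EReal} (n : ℕ)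
    (d : (Fin 2 × ℕ) →₀ ℕ) (x : Fin 2 × ℕ → EReal) (hx : ∀ v, x v ≠ ⊥)
    (hle : ∀ v ∈ d.support, c ≤ (v.2 : EReal) + ((ε * (p : ℝ) ^ (-(v.2 : ℤ)) : ℝ) : EReal) * x v)
    (hwt : ∑ v ∈ d.support, d v * p ^ v.2 = p ^ n)
    (hind : ∀ v ∈ d.support, v.2 ≤ n) :
    c ≤ (n : EReal) + ((ε * (p : ℝ) ^ (-(n : ℤ)) : ℝ) : EReal) *
      (∑ v ∈ d.support, (d v) • x v) := by
  have hwn : (0 : ℝ) < ε * (p : ℝ) ^ (-(n : ℤ)) := by positivity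
  rcases eq_or_ne c ⊥ with hc | hc
  · exact hc ▸ bot_le
  have hne : d.support.Nonempty := by
    rw [Finset.nonempty_iff_ne_empty]
    intro h
    rw [h, Finset.sum_empty] at hwt
    exact (pow_ne_zero n hp.ne') hwt.symm
  by_cases htop : ∃ v ∈ d.support, x v = ⊤
  · obtain ⟨v0, hv0, hxv0⟩ := htop
    have hsum : (∑ v ∈ d.support, (d v) • x v) = ⊤ := by
      refine ereal_sum_eq_top (fun v _ => ereal_nsmul_ne_bot (hx v) _) hv0 ?_
      rw [hxv0]
      exact ereal_nsmul_top (Finsupp.mem_support_iff.mp hv0)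
    rw [hsum, EReal.coe_mul_top_of_pos hwn, EReal.add_top_of_ne_bot (EReal.natCast_ne_bot _)]
    exact le_top
  · push_neg at htop
    set r : Fin 2 × ℕ → ℝ := fun v => (x v).toReal with hr
    have hxr : ∀ v ∈ d.support, x v = ((r v : ℝ) : EReal) :=
      fun v hv => (EReal.coe_toReal (htop v hv) (hx v)).symm
    obtain ⟨v1, hv1⟩ := hne
    have h1 := hle v1 hv1
    rw [hxr v1 hv1, ← EReal.coe_coe_eq_natCast, ← EReal.coe_mul, ← EReal.coe_add] at h1
    have hcne : c ≠ ⊤ := (lt_of_le_of_lt h1 (EReal.coe_lt_top _)).ne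
    set γ := c.toReal with hγ
    have hcγ : c = (γ : EReal) := (EReal.coe_toReal hcne hc).symm
    have hsum : (∑ v ∈ d.support, (d v) • x v)
        = ((∑ v ∈ d.support, (d v : ℝ) * r v : ℝ) : EReal) := by
      rw [ereal_coe_sum]
      exact Finset.sum_congr rfl fun v hv => by rw [hxr v hv, ereal_nsmul_coe]
    rw [hsum, hcγ, ← EReal.coe_coe_eq_natCast, ← EReal.coe_mul, ← EReal.coe_add,
      EReal.coe_le_coe_iff]
    have hler : ∀ v ∈ d.support, γ ≤ v.2 + ε * (p : ℝ) ^ (-(v.2 : ℤ)) * r v := by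
      intro v hv
      have h2 := hle v hv
      rw [hxr v hv, hcγ, ← EReal.coe_coe_eq_natCast, ← EReal.coe_mul, ← EReal.coe_add,
        EReal.coe_le_coe_iff] at h2
      exact h2
    -- now pure real arithmetic
    set S := ∑ v ∈ d.support, (d v : ℝ) * r v with hS
    have hw : ∑ v ∈ d.support, (d v : ℝ) * (p : ℝ) ^ (v.2 : ℕ) = (p : ℝ) ^ (n : ℕ) := by
      have := congrArg (Nat.cast : ℕ → ℝ) hwt
      push_cast at this
      exact this
    have hsum1 : ∑ v ∈ d.support, ((d v : ℝ) * (p : ℝ) ^ (v.2 : ℕ) * (γ - v.2)) ≤ ε * S := by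
      rw [hS, Finset.mul_sum]
      refine Finset.sum_le_sum fun v hv => ?_
      have h2 : γ - v.2 ≤ ε * (p : ℝ) ^ (-(v.2 : ℤ)) * r v := by linarith [hler v hv]
      have h3 := mul_le_mul_of_nonneg_left h2
        (by positivity : (0 : ℝ) ≤ (d v : ℝ) * (p : ℝ) ^ (v.2 : ℕ))
      have h4 : (d v : ℝ) * (p : ℝ) ^ (v.2 : ℕ) * (ε * (p : ℝ) ^ (-(v.2 : ℤ)) * r v)
          = ε * ((d v : ℝ) * r v) * ((p : ℝ) ^ (v.2 : ℕ) * (p : ℝ) ^ (-(v.2 : ℤ))) := by ring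
      rw [h4, zpow_cancel hp, mul_one] at h3
      linarith
    have hsum2 : ∑ v ∈ d.support, ((d v : ℝ) * (p : ℝ) ^ (v.2 : ℕ) * (γ - v.2))
        = γ * (p : ℝ) ^ (n : ℕ)
          - ∑ v ∈ d.support, (d v : ℝ) * (p : ℝ) ^ (v.2 : ℕ) * (v.2 : ℝ) := by
      rw [← hw, Finset.mul_sum, ← Finset.sum_sub_distrib]
      exact Finset.sum_congr rfl fun v hv => by ring
    have hsum3 : ∑ v ∈ d.support, (d v : ℝ) * (p : ℝ) ^ (v.2 : ℕ) * (v.2 : ℝ)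
        ≤ (n : ℝ) * (p : ℝ) ^ (n : ℕ) := by
      rw [← hw, Finset.mul_sum]
      refine Finset.sum_le_sum fun v hv => ?_
      have h5 : (v.2 : ℝ) ≤ (n : ℝ) := by exact_mod_cast hind v hv
      have h6 : (0 : ℝ) ≤ (d v : ℝ) * (p : ℝ) ^ (v.2 : ℕ) := by positivity
      nlinarith
    have hfin : (p : ℝ) ^ (n : ℕ) * (γ - n) ≤ ε * S := by linarith
    have h5 := mul_le_mul_of_nonneg_left hfin
      (by positivity : (0 : ℝ) ≤ (p : ℝ) ^ (-(n : ℤ)))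
    have hid : (p : ℝ) ^ (-(n : ℤ)) * ((p : ℝ) ^ (n : ℕ) * (γ - n))
        = (γ - n) * ((p : ℝ) ^ (n : ℕ) * (p : ℝ) ^ (-(n : ℤ))) := by ring
    rw [hid, zpow_cancel hp, mul_one] at h5
    have h6 : (p : ℝ) ^ (-(n : ℤ)) * (ε * S) = ε * (p : ℝ) ^ (-(n : ℤ)) * S := by ring
    rw [h6] at h5
    linarith

lemma key_numeric_mul {p : ℕ} (hp : 0 < p) {ε : ℝ} (hε : 0 < ε) {cx cy : EReal}
    (hcx : cx ≠ ⊥) (hcy : cy ≠ ⊥) (i j : ℕ) {x y : EReal} (hx : x ≠ ⊥) (hy : y ≠ ⊥)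
    (h1 : cx ≤ (i : EReal) + ((ε * (p : ℝ) ^ (-(i : ℤ)) : ℝ) : EReal) * x)
    (h2 : cy ≤ (j : EReal) + ((ε * (p : ℝ) ^ (-(j : ℤ)) : ℝ) : EReal) * y) :
    cx + cy ≤ ((i + j : ℕ) : EReal) + ((ε * (p : ℝ) ^ (-((i + j : ℕ) : ℤ)) : ℝ) : EReal) *
      ((p ^ j : ℕ) • x + (p ^ i : ℕ) • y) := by
  have hwn : (0 : ℝ) < ε * (p : ℝ) ^ (-((i + j : ℕ) : ℤ)) := by positivity
  rcases eq_or_ne x ⊤ with hxt | hxt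
  · have : (p ^ j : ℕ) • x + (p ^ i : ℕ) • y = ⊤ := by
      rw [hxt, ereal_nsmul_top (pow_ne_zero j hp.ne'), EReal.top_add_of_ne_bot
        (ereal_nsmul_ne_bot hy _)]
    rw [this, EReal.coe_mul_top_of_pos hwn, EReal.add_top_of_ne_bot (EReal.natCast_ne_bot _)]
    exact le_top
  rcases eq_or_ne y ⊤ with hyt | hyt
  · have : (p ^ j : ℕ) • x + (p ^ i : ℕ) • y = ⊤ := by
      rw [hyt, ereal_nsmul_top (pow_ne_zero i hp.ne'), EReal.add_top_of_ne_bot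
        (ereal_nsmul_ne_bot hx _)]
    rw [this, EReal.coe_mul_top_of_pos hwn, EReal.add_top_of_ne_bot (EReal.natCast_ne_bot _)]
    exact le_top
  -- both real
  have hxr : x = ((x.toReal : ℝ) : EReal) := (EReal.coe_toReal hxt hx).symm
  have hyr : y = ((y.toReal : ℝ) : EReal) := (EReal.coe_toReal hyt hy).symm
  set a := x.toReal
  set b := y.toReal
  rw [hxr] at h1
  rw [hyr] at h2
  rw [← EReal.coe_coe_eq_natCast, ← EReal.coe_mul, ← EReal.coe_add] at h1
  rw [← EReal.coe_coe_eq_natCast, ← EReal.coe_mul, ← EReal.coe_add] at h2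
  have hcxt : cx ≠ ⊤ := (lt_of_le_of_lt h1 (EReal.coe_lt_top _)).ne
  have hcyt : cy ≠ ⊤ := (lt_of_le_of_lt h2 (EReal.coe_lt_top _)).ne
  have hcxr : cx = ((cx.toReal : ℝ) : EReal) := (EReal.coe_toReal hcxt hcx).symm
  have hcyr : cy = ((cy.toReal : ℝ) : EReal) := (EReal.coe_toReal hcyt hcy).symm
  set u := cx.toReal
  set w := cy.toReal
  rw [hcxr] at h1 ⊢
  rw [hcyr] at h2 ⊢
  rw [EReal.coe_le_coe_iff] at h1 h2
  have hsum : (p ^ j : ℕ) • x + (p ^ i : ℕ) • y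
      = ((((p : ℝ) ^ (j : ℕ)) * a + ((p : ℝ) ^ (i : ℕ)) * b : ℝ) : EReal) := by
    rw [hxr, hyr, ereal_nsmul_coe, ereal_nsmul_coe, ← EReal.coe_add]
    push_cast
    rfl
  rw [hsum, ← EReal.coe_add, ← EReal.coe_coe_eq_natCast, ← EReal.coe_mul, ← EReal.coe_add,
    EReal.coe_le_coe_iff]
  -- real arithmetic
  have hp0 : (p : ℝ) ≠ 0 := by positivity
  have e1 : (p : ℝ) ^ (-((i + j : ℕ) : ℤ)) * (p : ℝ) ^ (j : ℕ) = (p : ℝ) ^ (-(i : ℤ)) := by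
    rw [← zpow_natCast (p : ℝ) j, ← zpow_add₀ hp0]
    congr 1
    push_cast
    ring
  have e2 : (p : ℝ) ^ (-((i + j : ℕ) : ℤ)) * (p : ℝ) ^ (i : ℕ) = (p : ℝ) ^ (-(j : ℤ)) := by
    rw [← zpow_natCast (p : ℝ) i, ← zpow_add₀ hp0]
    congr 1
    push_cast
    ring
  have e3 : ε * (p : ℝ) ^ (-((i + j : ℕ) : ℤ)) * ((p : ℝ) ^ (j : ℕ) * a + (p : ℝ) ^ (i : ℕ) * b)
      = ε * (p : ℝ) ^ (-(i : ℤ)) * a + ε * (p : ℝ) ^ (-(j : ℤ)) * b := by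
    rw [← e1, ← e2]
    ring
  have e4 : ((i + j : ℕ) : ℝ) = (i : ℝ) + (j : ℝ) := by push_cast; ring
  rw [e3, e4]
  linarith



open MvPolynomial Finsupp

lemma hom_pow {σ R : Type*} [CommRing R] {w : σ → ℕ} {φ : MvPolynomial σ R} {m : ℕ}
    (h : IsWeightedHomogeneous w φ m) (k : ℕ) : IsWeightedHomogeneous w (φ ^ k) (k * m) := by
  induction k with
  | zero => simpa using isWeightedHomogeneous_one R w
  | succ k ih =>
    rw [pow_succ, Nat.succ_mul]
    exact ih.mul h

lemma hom_sub {σ R : Type*} [CommRing R] {w : σ → ℕ} {φ ψ : MvPolynomial σ R} {m : ℕ}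
    (h1 : IsWeightedHomogeneous w φ m) (h2 : IsWeightedHomogeneous w ψ m) :
    IsWeightedHomogeneous w (φ - ψ) m := by
  intro d hd
  rw [MvPolynomial.coeff_sub] at hd
  by_cases hφ : coeff d φ = 0
  · exact h2 (by intro h; rw [hφ, h, sub_zero] at hd; exact hd rfl)
  · exact h1 hφ

variable (p : ℕ) [hp : Fact p.Prime]

lemma hom_wittPolynomial (R : Type*) [CommRing R] (n : ℕ) :
    IsWeightedHomogeneous (fun i : ℕ => p ^ i) (wittPolynomial p R n) (p ^ n) := by
  rw [wittPolynomial]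
  apply IsWeightedHomogeneous.sum
  intro i hi
  apply isWeightedHomogeneous_monomial
  rw [weight_apply, Finsupp.sum_single_index (by simp)]
  rw [Finset.mem_range] at hi
  rw [smul_eq_mul, ← pow_add]
  congr 1
  omega

lemma hom_xInTermsOfW (n : ℕ) :
    IsWeightedHomogeneous (fun i : ℕ => p ^ i) (xInTermsOfW p ℚ n) (p ^ n) := by
  induction n using Nat.strong_induction_on with
  | _ n ih =>
    rw [xInTermsOfW_eq]
    have h1 : IsWeightedHomogeneous (fun i : ℕ => p ^ i)
        (X n - ∑ i ∈ Finset.range n, C ((p : ℚ) ^ i) * xInTermsOfW p ℚ i ^ p ^ (n - i))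
        (p ^ n) := by
      apply hom_sub
      · exact isWeightedHomogeneous_X ℚ _ n
      · apply IsWeightedHomogeneous.sum
        intro i hi
        rw [Finset.mem_range] at hi
        have := (isWeightedHomogeneous_C (fun i : ℕ => p ^ i) ((p : ℚ) ^ i)).mul
          (hom_pow (ih i hi) (p ^ (n - i)))
        rw [zero_add, ← pow_add] at this
        convert this using 2
        all_goals first | rfl | omega
    have h2 := h1.mul (isWeightedHomogeneous_C (fun i : ℕ => p ^ i) ((⅟(p : ℚ)) ^ n))
    rw [add_zero] at h2
    exact h2

lemma hom_bind₁ {σ τ R : Type*} [CommRing R] {w : σ → ℕ} {w' : τ → ℕ}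
    {φ : MvPolynomial σ R} {m : ℕ} {g : σ → MvPolynomial τ R}
    (hφ : IsWeightedHomogeneous w φ m)
    (hg : ∀ k, IsWeightedHomogeneous w' (g k) (w k)) :
    IsWeightedHomogeneous w' (bind₁ g φ) m := by
  classical
  rw [bind₁, aeval_def, MvPolynomial.algebraMap_eq, eval₂_eq]
  apply IsWeightedHomogeneous.sum
  intro d hd
  have hdeg : (weight w) d = m := hφ (MvPolynomial.mem_support_iff.mp hd)
  have h := (isWeightedHomogeneous_C w' (coeff d φ)).mul
    (IsWeightedHomogeneous.prod d.support (fun i => g i ^ d i) (fun i => d i * w i)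
      (fun i _ => hom_pow (hg i) (d i)))
  rw [zero_add] at h
  have : ∑ i ∈ d.support, d i * w i = m := by
    rw [← hdeg, weight_apply, Finsupp.sum]
    exact Finset.sum_congr rfl fun i _ => (smul_eq_mul (d i) (w i)).symm ▸ rfl
  rwa [this] at h

lemma hom_rename {R : Type*} [CommRing R] {φ : MvPolynomial ℕ R} {m : ℕ}
    {w' : Fin 2 × ℕ → ℕ} (b : Fin 2)
    (h : IsWeightedHomogeneous (fun i : ℕ => w' (b, i)) φ m) :
    IsWeightedHomogeneous w' (rename (Prod.mk b) φ) m := by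
  intro d hd
  obtain ⟨u, rfl, hu⟩ := coeff_rename_ne_zero _ _ _ hd
  have e : weight w' (u.mapDomain (Prod.mk b)) = weight (fun i : ℕ => w' (b, i)) u := by
    rw [weight_apply, weight_apply]
    apply Finsupp.sum_mapDomain_index
    · intro a
      exact zero_smul ℕ (w' a)
    · intro a m₁ m₂
      exact add_smul m₁ m₂ (w' a)
  rw [e]
  exact h hu

lemma hom_wittStructureInt (Φ : MvPolynomial (Fin 2) ℤ)
    (hΦ : ∀ k : ℕ, IsWeightedHomogeneous (fun v : Fin 2 × ℕ => p ^ v.2)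
      (bind₁ (fun b : Fin 2 => rename (Prod.mk b) (wittPolynomial p ℚ k))
        (map (Int.castRingHom ℚ) Φ)) (p ^ k))
    (n : ℕ) :
    IsWeightedHomogeneous (fun v : Fin 2 × ℕ => p ^ v.2) (wittStructureInt p Φ n) (p ^ n) := by
  intro d hd
  have hcoeff : coeff d (wittStructureRat p (map (Int.castRingHom ℚ) Φ) n) ≠ 0 := by
    rw [← map_wittStructureInt, coeff_map]
    simpa using hd
  have hhom : IsWeightedHomogeneous (fun v : Fin 2 × ℕ => p ^ v.2)
      (wittStructureRat p (map (Int.castRingHom ℚ) Φ) n) (p ^ n) := by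
    rw [wittStructureRat]
    exact hom_bind₁ (hom_xInTermsOfW p n) hΦ
  exact hhom hcoeff

set_option maxHeartbeats 1000000 in
lemma hom_wittAdd (n : ℕ) :
    IsWeightedHomogeneous (fun v : Fin 2 × ℕ => p ^ v.2) (WittVector.wittAdd p n) (p ^ n) := by
  have : WittVector.wittAdd p n = wittStructureInt p (X 0 + X 1) n := rfl
  rw [this]
  apply hom_wittStructureInt
  intro k
  rw [map_add, map_X, map_X, map_add, bind₁_X_right, bind₁_X_right]
  exact (hom_rename 0 (hom_wittPolynomial p ℚ k)).add (hom_rename 1 (hom_wittPolynomial p ℚ k))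

set_option maxHeartbeats 1000000 in
lemma hom_wittSub (n : ℕ) :
    IsWeightedHomogeneous (fun v : Fin 2 × ℕ => p ^ v.2) (WittVector.wittSub p n) (p ^ n) := by
  have : WittVector.wittSub p n = wittStructureInt p (X 0 - X 1) n := rfl
  rw [this]
  apply hom_wittStructureInt
  intro k
  rw [map_sub, map_X, map_X, map_sub, bind₁_X_right, bind₁_X_right]
  exact hom_sub (hom_rename 0 (hom_wittPolynomial p ℚ k))
    (hom_rename 1 (hom_wittPolynomial p ℚ k))

open WittVector

section Main

variable {p : ℕ} [hp : Fact p.Prime] {A : Type*} [CommRing A] {ν : A → EReal} {ε : ℝ}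

lemma wexpr_pos (hε : 0 < ε) (i : ℕ) : (0 : ℝ) < ε * (p : ℝ) ^ (-(i : ℤ)) := by
  have h : (0 : ℝ) < (p : ℝ) := by exact_mod_cast hp.out.pos
  positivity

lemma gaussNorm_le (α : WittVector p A) (i : ℕ) :
    gaussNorm p ν ε α ≤ (i : EReal) + ((ε * (p : ℝ) ^ (-(i : ℤ)) : ℝ) : EReal) * ν (α.coeff i) :=
  iInf_le _ i

lemma term_top (hε : 0 < ε) {i : ℕ} {x : A} (hx : ν x = ⊤) :
    (i : EReal) + ((ε * (p : ℝ) ^ (-(i : ℤ)) : ℝ) : EReal) * ν x = ⊤ := by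
  rw [hx, EReal.coe_mul_top_of_pos (wexpr_pos hε i),
    EReal.add_top_of_ne_bot (EReal.natCast_ne_bot _)]

lemma gaussNorm_zero (hν : IsPseudovaluation ν) (hε : 0 < ε) :
    gaussNorm p ν ε (0 : WittVector p A) = ⊤ := by
  rw [gaussNorm, iInf_eq_top]
  intro i
  exact term_top hε (by rw [WittVector.zero_coeff, hν.map_zero])

lemma gaussNorm_one (hν : IsPseudovaluation ν) (hε : 0 < ε) :
    gaussNorm p ν ε (1 : WittVector p A) = 0 := by
  apply le_antisymm
  · refine le_trans (gaussNorm_le 1 0) ?_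
    rw [WittVector.one_coeff_zero, hν.map_one, Nat.cast_zero, mul_zero, add_zero]
  · refine le_iInf fun i => ?_
    rcases Nat.eq_zero_or_pos i with h | h
    · subst h
      simp [WittVector.one_coeff_zero, hν.map_one]
    · have hc0 : ((1 : WittVector p A).coeff i) = 0 := by
        rw [← map_one (teichmuller p)]
        exact teichmuller_coeff_pos p 1 i h
      have hc1 : ν ((1 : WittVector p A).coeff i) = ⊤ := by rw [hc0, hν.map_zero]
      rw [term_top hε hc1]
      exact le_top

lemma iterate_verschiebung_coeff_eq_zero (x : WittVector p A) :
    ∀ {m i : ℕ}, i < m → (verschiebung^[m] x).coeff i = 0 := by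
  intro m
  induction m with
  | zero => omega
  | succ m ih =>
    intro i hi
    rw [Function.iterate_succ_apply']
    cases i with
    | zero => exact verschiebung_coeff_zero _
    | succ j =>
      rw [verschiebung_coeff_succ]
      exact ih (by omega)

lemma iter_vt_coeff (a : A) (m k : ℕ) :
    ((verschiebung^[m] (teichmuller p a)).coeff k) = if k = m then a else 0 := by
  rcases lt_trichotomy k m with h | rfl | h
  · rw [if_neg h.ne, iterate_verschiebung_coeff_eq_zero _ h]
  · rw [if_pos rfl]
    have h2 := iterate_verschiebung_coeff (teichmuller p a) k 0
    rw [zero_add] at h2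
    rw [h2, teichmuller_coeff_zero]
  · rw [if_neg h.ne']
    have h2 := iterate_verschiebung_coeff (teichmuller p a) m (k - m)
    rw [Nat.sub_add_cancel h.le] at h2
    rw [h2]
    exact teichmuller_coeff_pos p a (k - m) (by omega)

lemma coeff_sum_vtm (a : ℕ → A) (m : ℕ) (k : ℕ) :
    ((∑ i ∈ Finset.range (m + 1), verschiebung^[i] (teichmuller p (a i))).coeff k)
      = if k ≤ m then a k else 0 := by
  induction m generalizing k with
  | zero =>
    rw [Finset.range_one, Finset.sum_singleton, iter_vt_coeff]
    by_cases h : k = 0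
    · subst h
      rw [if_pos rfl, if_pos le_rfl]
    · rw [if_neg h, if_neg (by omega : ¬ k ≤ 0)]
  | succ m ih =>
    rw [Finset.sum_range_succ, coeff_add_of_disjoint]
    · rw [ih, iter_vt_coeff]
      by_cases h1 : k ≤ m
      · rw [if_pos h1, if_neg (by omega : ¬ k = m + 1), if_pos (by omega : k ≤ m + 1), add_zero]
      · by_cases h2 : k = m + 1
        · rw [if_neg h1, if_pos h2, if_pos (by omega : k ≤ m + 1), zero_add, h2]
        · rw [if_neg h1, if_neg h2, if_neg (by omega : ¬ k ≤ m + 1), add_zero]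
    · intro j
      by_cases hj : j ≤ m
      · right
        rw [iter_vt_coeff, if_neg (by omega : ¬ j = m + 1)]
      · left
        rw [ih, if_neg hj]

lemma coeff_init (x : WittVector p A) (n k : ℕ) :
    (init n x).coeff k = if k < n then x.coeff k else 0 := by
  simp only [init, select, WittVector.coeff_mk]
  by_cases h : k < n <;> simp [h]

lemma init_eq_sum_vtm (x : WittVector p A) (n : ℕ) :
    init (n + 1) x
      = ∑ i ∈ Finset.range (n + 1), verschiebung^[i] (teichmuller p (x.coeff i)) := by
  ext k
  rw [coeff_sum_vtm, coeff_init]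
  by_cases h : k ≤ n
  · rw [if_pos (by omega : k < n + 1), if_pos h]
  · rw [if_neg (by omega : ¬ k < n + 1), if_neg h]

lemma mul_coeff_trunc (x y : WittVector p A) (n : ℕ) :
    (x * y).coeff n = ((init (n + 1) x) * (init (n + 1) y)).coeff n := by
  have h2 : ∀ z : WittVector p A, (init (n + 1) z).coeff n = z.coeff n := fun z => by
    rw [coeff_init, if_pos (Nat.lt_succ_self n)]
  rw [← h2 (x * y), init_mul, h2]

lemma pv_le_weighted_sum (hν : IsPseudovaluation ν) {ι : Type*} {s : Finset ι} {f : ι → A}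
    {c : EReal} {n : ℕ} {w : ℝ} (hw : 0 < w)
    (h : ∀ i ∈ s, c ≤ (n : EReal) + (w : EReal) * ν (f i)) :
    c ≤ (n : EReal) + (w : EReal) * ν (∑ i ∈ s, f i) := by
  rcases s.eq_empty_or_nonempty with rfl | hne
  · rw [Finset.sum_empty, hν.map_zero, EReal.coe_mul_top_of_pos hw,
      EReal.add_top_of_ne_bot (EReal.natCast_ne_bot _)]
    exact le_top
  · obtain ⟨i0, hi0, hmin⟩ := Finset.exists_min_image s (fun i => ν (f i)) hne
    have hs : ν (f i0) ≤ ν (∑ i ∈ s, f i) := pv_sum hν fun i hi => hmin i hi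
    exact le_trans (h i0 hi0)
      (add_le_add_right (mul_le_mul_of_nonneg_left hs (EReal.coe_nonneg.mpr hw.le)) _)

lemma gauss_coeff_bound (hν : IsPseudovaluation ν) (hproper : ∀ a : A, ν a ≠ ⊥) (hε : 0 < ε)
    {c : EReal} (n : ℕ) (φ : MvPolynomial (Fin 2 × ℕ) ℤ)
    (hhom : MvPolynomial.IsWeightedHomogeneous (fun v : Fin 2 × ℕ => p ^ v.2) φ (p ^ n))
    (hvars : φ.vars ⊆ Finset.univ ×ˢ Finset.range (n + 1))
    (g : Fin 2 × ℕ → A)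
    (hle : ∀ v : Fin 2 × ℕ,
      c ≤ (v.2 : EReal) + ((ε * (p : ℝ) ^ (-(v.2 : ℤ)) : ℝ) : EReal) * ν (g v)) :
    c ≤ (n : EReal) + ((ε * (p : ℝ) ^ (-(n : ℤ)) : ℝ) : EReal) * ν (MvPolynomial.aeval g φ) := by
  rw [MvPolynomial.aeval_def, MvPolynomial.eval₂_eq]
  apply pv_le_weighted_sum hν (wexpr_pos hε n)
  intro d hd
  have hwt : ∑ v ∈ d.support, d v * p ^ v.2 = p ^ n := by
    have h1 := hhom (MvPolynomial.mem_support_iff.mp hd)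
    rw [Finsupp.weight_apply, Finsupp.sum] at h1
    simpa [smul_eq_mul] using h1
  have hind : ∀ v ∈ d.support, v.2 ≤ n := fun v hv => by
    have hvmem : v ∈ φ.vars := (MvPolynomial.mem_vars v).mpr ⟨d, hd, hv⟩
    have h2 := hvars hvmem
    rw [Finset.mem_product, Finset.mem_range] at h2
    omega
  have hkey := key_numeric_add hp.out.pos hε n d (fun v => ν (g v)) (fun v => hproper _)
    (fun v _ => hle v) hwt hind
  refine le_trans hkey (add_le_add_right (mul_le_mul_of_nonneg_left ?_
    (EReal.coe_nonneg.mpr (wexpr_pos hε n).le)) _)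
  refine le_trans (pv_prod hν hproper d.support g (fun v => d v)) ?_
  have halg : (algebraMap ℤ A) (MvPolynomial.coeff d φ) = ((MvPolynomial.coeff d φ : ℤ) : A) := by
    simp
  rw [halg]
  exact pv_term hν hproper _ _

lemma hle_pair (ξ η : WittVector p A) (v : Fin 2 × ℕ) :
    min (gaussNorm p ν ε ξ) (gaussNorm p ν ε η) ≤
      (v.2 : EReal) + ((ε * (p : ℝ) ^ (-(v.2 : ℤ)) : ℝ) : EReal) *
        ν ((Function.uncurry ![ξ.coeff, η.coeff]) v) := by
  obtain ⟨b, i⟩ := v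
  fin_cases b
  · refine le_trans (min_le_left _ _) ?_
    simpa [Function.uncurry] using gaussNorm_le (ν := ν) (ε := ε) ξ i
  · refine le_trans (min_le_right _ _) ?_
    simpa [Function.uncurry] using gaussNorm_le (ν := ν) (ε := ε) η i

lemma gauss_add (hν : IsPseudovaluation ν) (hproper : ∀ a : A, ν a ≠ ⊥) (hε : 0 < ε)
    (ξ η : WittVector p A) :
    min (gaussNorm p ν ε ξ) (gaussNorm p ν ε η) ≤ gaussNorm p ν ε (ξ + η) := by
  refine le_iInf fun n => ?_
  rw [WittVector.add_coeff]
  exact gauss_coeff_bound hν hproper hε n _ (hom_wittAdd p n) (wittAdd_vars p n) _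
    (hle_pair ξ η)

lemma gauss_sub (hν : IsPseudovaluation ν) (hproper : ∀ a : A, ν a ≠ ⊥) (hε : 0 < ε)
    (ξ η : WittVector p A) :
    min (gaussNorm p ν ε ξ) (gaussNorm p ν ε η) ≤ gaussNorm p ν ε (ξ - η) := by
  refine le_iInf fun n => ?_
  rw [WittVector.sub_coeff]
  exact gauss_coeff_bound hν hproper hε n _ (hom_wittSub p n) (wittSub_vars p n) _
    (hle_pair ξ η)

lemma gauss_finset_sum (hν : IsPseudovaluation ν) (hproper : ∀ a : A, ν a ≠ ⊥) (hε : 0 < ε)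
    {ι : Type*} {s : Finset ι} {f : ι → WittVector p A} {c : EReal}
    (h : ∀ i ∈ s, c ≤ gaussNorm p ν ε (f i)) : c ≤ gaussNorm p ν ε (∑ i ∈ s, f i) := by
  classical
  induction s using Finset.induction with
  | empty =>
    rw [Finset.sum_empty, gaussNorm_zero hν hε]
    exact le_top
  | @insert a s ha ih =>
    rw [Finset.sum_insert ha]
    refine le_trans (le_min (h a (Finset.mem_insert_self _ _))
      (ih fun i hi => h i (Finset.mem_insert_of_mem hi))) ?_
    exact gauss_add hν hproper hε _ _

lemma gaussNorm_vtm (hν : IsPseudovaluation ν) (hε : 0 < ε) (m : ℕ) (c : A) :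
    (m : EReal) + ((ε * (p : ℝ) ^ (-(m : ℤ)) : ℝ) : EReal) * ν c
      ≤ gaussNorm p ν ε (verschiebung^[m] (teichmuller p c)) := by
  refine le_iInf fun k => ?_
  rcases eq_or_ne k m with rfl | hk
  · rw [iter_vt_coeff, if_pos rfl]
  · have hc0 : (verschiebung^[m] (teichmuller p c)).coeff k = 0 := by
      rw [iter_vt_coeff, if_neg hk]
    rw [term_top (x := (verschiebung^[m] (teichmuller p c)).coeff k) hε
      (by rw [hc0, hν.map_zero])]
    exact le_top

lemma frob_iter_teich [CharP A p] (c : A) (j : ℕ) :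
    frobenius^[j] (teichmuller p c) = teichmuller p (c ^ p ^ j) := by
  ext k
  rw [iterate_frobenius_coeff]
  rcases Nat.eq_zero_or_pos k with rfl | hk
  · rw [teichmuller_coeff_zero, teichmuller_coeff_zero]
  · rw [teichmuller_coeff_pos p c k hk, teichmuller_coeff_pos p (c ^ p ^ j) k hk,
      zero_pow (pow_ne_zero _ hp.out.ne_zero)]

lemma gauss_mul [CharP A p] (hν : IsPseudovaluation ν) (hproper : ∀ a : A, ν a ≠ ⊥)
    (hε : 0 < ε) (ξ η : WittVector p A)
    (hξ : gaussNorm p ν ε ξ ≠ ⊥) (hη : gaussNorm p ν ε η ≠ ⊥) :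
    gaussNorm p ν ε ξ + gaussNorm p ν ε η ≤ gaussNorm p ν ε (ξ * η) := by
  refine le_iInf fun n => ?_
  rw [mul_coeff_trunc ξ η n, init_eq_sum_vtm, init_eq_sum_vtm, Finset.sum_mul_sum]
  refine le_trans ?_ (gaussNorm_le _ n)
  refine gauss_finset_sum hν hproper hε fun i hi => ?_
  refine gauss_finset_sum hν hproper hε fun j hj => ?_
  rw [iterate_verschiebung_mul, frob_iter_teich, frob_iter_teich, ← map_mul]
  refine le_trans ?_ (gaussNorm_vtm hν hε (i + j) _)
  refine le_trans (key_numeric_mul hp.out.pos hε hξ hη i j (hproper _) (hproper _)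
    (gaussNorm_le ξ i) (gaussNorm_le η j)) ?_
  refine add_le_add_right (mul_le_mul_of_nonneg_left ?_
    (EReal.coe_nonneg.mpr (wexpr_pos hε (i + j)).le)) _
  refine le_trans (add_le_add (pv_pow hν hproper _ _) (pv_pow hν hproper _ _)) ?_
  exact hν.add_le_mul _ _ (hproper _) (hproper _)

end Main

end GaussAux
/-- For a prime `p`, a commutative ring `A` with `pA = 0` with a proper
pseudovaluation `ν`, and `ε > 0`, the Gauss norm `γ_ε` is a pseudovaluation on `W(A)`;
in particular the Witt vectors with radius of convergence `ε` form a subring. -/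
theorem statement0 (p : ℕ) [Fact p.Prime] (A : Type*) [CommRing A]
    (hpA : ((p : ℕ) : A) = 0)
    (ν : A → EReal) (hν : IsPseudovaluation ν) (hproper : ∀ a : A, ν a ≠ ⊥)
    (ε : ℝ) (hε : 0 < ε) :
    gaussNorm p ν ε (0 : WittVector p A) = ⊤ ∧
    gaussNorm p ν ε (1 : WittVector p A) = 0 ∧
    (∀ ξ η : WittVector p A,
      min (gaussNorm p ν ε ξ) (gaussNorm p ν ε η) ≤ gaussNorm p ν ε (ξ + η)) ∧
    (∀ ξ η : WittVector p A,
      min (gaussNorm p ν ε ξ) (gaussNorm p ν ε η) ≤ gaussNorm p ν ε (ξ - η)) ∧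
    (∀ ξ η : WittVector p A, gaussNorm p ν ε ξ ≠ ⊥ → gaussNorm p ν ε η ≠ ⊥ →
      gaussNorm p ν ε ξ + gaussNorm p ν ε η ≤ gaussNorm p ν ε (ξ * η)) ∧
    ∃ S : Subring (WittVector p A), ∀ α : WittVector p A,
      α ∈ S ↔ gaussNorm p ν ε α ≠ ⊥ := by
  have h10 : (1 : A) ≠ 0 := by
    intro h
    have h1 := hν.map_one
    rw [h, hν.map_zero] at h1
    exact (by simp : (⊤ : EReal) ≠ 0) h1
  haveI : Nontrivial A := ⟨⟨1, 0, h10⟩⟩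
  haveI hchar : CharP A p := by
    have hdvd : ringChar A ∣ p := ringChar.dvd hpA
    rcases (Nat.Prime.eq_one_or_self_of_dvd Fact.out _ hdvd) with h1 | h1
    · exfalso
      have h2 : ((ringChar A : ℕ) : A) = 0 := CharP.cast_eq_zero A (ringChar A)
      rw [h1, Nat.cast_one] at h2
      exact h10 h2
    · rw [← h1]
      exact ringChar.charP A
  have hne : ∀ {x y : EReal}, x ≤ y → x ≠ ⊥ → y ≠ ⊥ :=
    fun h hx h0 => hx (le_bot_iff.mp (h0 ▸ h))
  refine ⟨GaussAux.gaussNorm_zero hν hε, GaussAux.gaussNorm_one hν hε,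
    fun ξ η => GaussAux.gauss_add hν hproper hε ξ η,
    fun ξ η => GaussAux.gauss_sub hν hproper hε ξ η,
    fun ξ η hξ hη => GaussAux.gauss_mul hν hproper hε ξ η hξ hη, ?_⟩
  refine ⟨{ carrier := {α : WittVector p A | gaussNorm p ν ε α ≠ ⊥}
            zero_mem' := by
              simp only [Set.mem_setOf_eq, GaussAux.gaussNorm_zero hν hε]
              simp
            one_mem' := by
              simp only [Set.mem_setOf_eq, GaussAux.gaussNorm_one hν hε]
              simp
            add_mem' := fun {a b} ha hb =>
              hne (GaussAux.gauss_add hν hproper hε a b)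
                (lt_min (bot_lt_iff_ne_bot.mpr ha) (bot_lt_iff_ne_bot.mpr hb)).ne'
            neg_mem' := fun {a} ha => by
              have h := GaussAux.gauss_sub hν hproper hε 0 a
              rw [zero_sub, GaussAux.gaussNorm_zero hν hε, min_eq_right le_top] at h
              exact hne h ha
            mul_mem' := fun {a b} ha hb =>
              hne (GaussAux.gauss_mul hν hproper hε a b ha hb)
                (by rw [ne_eq, EReal.add_eq_bot_iff]; tauto) },
    fun α => Iff.rfl⟩
end
end

section
/- Let (R, μ) be a commutative ring with a negative pseudovaluation and let A be an R-algebra which is free of finite rank n as an R-module. Let τ be an admissible pseudovaluation on the finitely generated R-algebra A. Fix an R-module isomorphism φ : Rⁿ ≅ A and let μⁿ denote the function on A obtained by transporting (a₁, …, aₙ) ↦ min_i μ(a_i) along φ. Then τ is linearly equivalent to μⁿ. -/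
open scoped Classical

noncomputable section

/-- Any finite family of non-`⊥` extended reals has a common real lower bound. -/
private lemma statement3_ereal_lb {ι : Type*} (s : Finset ι) (v : ι → EReal)
    (h : ∀ i ∈ s, v i ≠ ⊥) : ∃ x : ℝ, ∀ i ∈ s, (x : EReal) ≤ v i := by
  classical
  refine ⟨∑ j ∈ s, min 0 (v j).toReal, fun i hi => ?_⟩
  rcases eq_or_ne (v i) ⊤ with htop | hne
  · rw [htop]; exact le_top
  · have hvi : ((v i).toReal : EReal) = v i := EReal.coe_toReal hne (h i hi)
    rw [← hvi]
    apply EReal.coe_le_coe_iff.mpr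
    have h1 : ∑ j ∈ s.erase i, min 0 (v j).toReal ≤ 0 :=
      Finset.sum_nonpos fun j _ => min_le_left _ _
    have h2 : min 0 (v i).toReal ≤ (v i).toReal := min_le_right _ _
    have h3 := Finset.add_sum_erase s (fun j => min 0 (v j).toReal) hi
    linarith

/-- If `w` is superadditive for `min` and `w 0 = ⊤` then any common lower bound of a
family of values is a lower bound of the value of the finite sum. -/
private lemma statement3_le_pv_sum {X : Type*} [AddCommMonoid X] {ι : Type*} (w : X → EReal)
    (h0 : (⊤ : EReal) ≤ w 0) (hadd : ∀ x y, min (w x) (w y) ≤ w (x + y))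
    (s : Finset ι) (f : ι → X) :
    ∀ b : EReal, (∀ i ∈ s, b ≤ w (f i)) → b ≤ w (∑ i ∈ s, f i) := by
  classical
  induction s using Finset.induction_on with
  | empty => intro b _; rw [Finset.sum_empty]; exact le_trans le_top h0
  | @insert a s ha ih =>
      intro b hb
      rw [Finset.sum_insert ha]
      exact le_trans
        (le_min (hb a (Finset.mem_insert_self _ _))
          (ih b fun i hi => hb i (Finset.mem_insert_of_mem hi))) (hadd _ _)

private lemma statement3_sub_real_ne_bot {x : EReal} (hx : x ≠ ⊥) (w : ℝ) :
    x - (w : EReal) ≠ ⊥ := by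
  rcases eq_or_ne x ⊤ with rfl | h
  · rw [EReal.top_sub_coe]; simp
  · lift x to ℝ using ⟨h, hx⟩
    rw [← EReal.coe_sub]; exact EReal.coe_ne_bot _

private lemma statement3_pi_decomp {R : Type*} [CommRing R] {n : ℕ} (r : Fin n → R) :
    r = ∑ i, r i • (Pi.single i (1:R) : Fin n → R) := by
  conv_lhs => rw [← Finset.univ_sum_single r]
  refine Finset.sum_congr rfl fun i _ => ?_
  funext j; simp [Pi.single_apply]

/-- If `A` is an `R`-algebra, free of rank `n` as an `R`-module (via an
isomorphism `φ : Rⁿ ≅ A`), and `τ` is an admissible pseudovaluation on `A`, then `τ`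
is linearly equivalent to the transport `μⁿ` of the order function
`(a₁, …, aₙ) ↦ min_i μ(a_i)` along `φ`. -/
theorem statement3 (R A : Type*) [CommRing R] [CommRing A] [Algebra R A]
    (μ : R → EReal) (hμ : IsNegativePV μ)
    (n : ℕ) (φ : (Fin n → R) ≃ₗ[R] A)
    (τ : A → EReal) (hτ : IsAdmissiblePV μ τ) :
    LinearlyEquivalent τ (fun a : A => ⨅ i : Fin n, μ (φ.symm a i)) := by
  classical
  obtain ⟨hpv, hbot, hneg⟩ := hμ
  obtain ⟨m, π, d, hπ, hd, hτeq⟩ := hτ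
  -- basic facts about μ
  have hμnegx : ∀ x : R, μ x ≤ μ (-x) := by
    intro x
    have h := hpv.min_le_sub 0 x
    rw [zero_sub] at h
    simpa [hpv.map_zero] using h
  have hμadd : ∀ x y : R, min (μ x) (μ y) ≤ μ (x + y) := by
    intro x y
    have h := hpv.min_le_sub x (-y)
    rw [sub_neg_eq_add] at h
    exact le_trans (min_le_min le_rfl (hμnegx y)) h
  have hμmul : ∀ x y : R, μ x + μ y ≤ μ (x * y) := fun x y =>
    hpv.add_le_mul x y (hbot x) (hbot y)
  have hμreal : ∀ r : R, r ≠ 0 → ∃ x : ℝ, x ≤ 0 ∧ μ r = (x : EReal) := by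
    intro r hr
    have h1 : μ r ≤ 0 := hneg r hr
    have h3 : μ r ≠ ⊤ := ne_top_of_le_ne_top (by simp) h1
    refine ⟨(μ r).toReal, ?_, (EReal.coe_toReal h3 (hbot r)).symm⟩
    simpa using EReal.toReal_le_toReal h1 (hbot r) (by simp)
  -- basic facts about μⁿ
  have ms0 : (⊤ : EReal) ≤ ⨅ i, μ (φ.symm (0 : A) i) :=
    le_iInf fun i => by rw [map_zero, Pi.zero_apply, hpv.map_zero]
  have msadd : ∀ x y : A,
      min (⨅ i, μ (φ.symm x i)) (⨅ i, μ (φ.symm y i)) ≤ ⨅ i, μ (φ.symm (x + y) i) := by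
    intro x y
    refine le_iInf fun i => ?_
    have hc : φ.symm (x + y) i = φ.symm x i + φ.symm y i := by
      rw [map_add]; rfl
    rw [hc]
    exact le_trans (min_le_min (iInf_le _ i) (iInf_le _ i)) (hμadd _ _)
  have mssmul : ∀ (r : R) (z : A),
      μ r + (⨅ i, μ (φ.symm z i)) ≤ ⨅ i, μ (φ.symm (r • z) i) := by
    intro r z
    refine le_iInf fun i => ?_
    have hc : φ.symm (r • z) i = r * φ.symm z i := by
      rw [map_smul]; rfl
    rw [hc]
    exact le_trans (add_le_add_right (iInf_le _ i) _) (hμmul _ _)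
  have mslb : ∀ z : A, ∃ x : ℝ, (x : EReal) ≤ ⨅ i, μ (φ.symm z i) := by
    intro z
    obtain ⟨x, hx⟩ := statement3_ereal_lb Finset.univ (fun i => μ (φ.symm z i))
      (fun i _ => hbot _)
    exact ⟨x, le_iInf fun i => hx i (Finset.mem_univ i)⟩
  -- basis and decomposition
  obtain ⟨e, he⟩ : ∃ e : Fin n → A, ∀ i, e i = φ (Pi.single i 1) := ⟨_, fun _ => rfl⟩
  have decomp : ∀ z : A, z = ∑ i, φ.symm z i • e i := by
    intro z
    calc z = φ (φ.symm z) := (φ.apply_symm_apply z).symm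
      _ = φ (∑ i, φ.symm z i • (Pi.single i (1:R) : Fin n → R)) := by
          rw [← statement3_pi_decomp (φ.symm z)]
      _ = ∑ i, φ.symm z i • φ ((Pi.single i (1:R) : Fin n → R)) := by
          rw [map_sum]; simp_rw [map_smul]
      _ = ∑ i, φ.symm z i • e i := by simp_rw [← he]
  -- the product constant E
  have hL2 : ∀ p : Fin n × Fin n, ∃ x : ℝ,
      (x : EReal) ≤ ⨅ i, μ (φ.symm (e p.1 * e p.2) i) := fun p => mslb _
  choose L2 hL2' using hL2
  obtain ⟨E, hEdef⟩ : ∃ E : ℝ, E = ∑ p : Fin n × Fin n, max 0 (-(L2 p)) := ⟨_, rfl⟩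
  have hE0 : 0 ≤ E := hEdef ▸ Finset.sum_nonneg fun p _ => le_max_left _ _
  have hE2 : ∀ i j : Fin n, ((-E : ℝ) : EReal) ≤ ⨅ i', μ (φ.symm (e i * e j) i') := by
    intro i j
    have h1 : max 0 (-(L2 (i, j))) ≤ E := by
      rw [hEdef]
      exact Finset.single_le_sum (f := fun p => max 0 (-(L2 p)))
        (fun p _ => le_max_left _ _) (Finset.mem_univ (i, j))
    have h2 : -(max 0 (-(L2 (i, j)))) ≤ L2 (i, j) := neg_le.mpr (le_max_right _ _)
    exact le_trans (EReal.coe_le_coe_iff.mpr (by linarith)) (hL2' (i, j))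
  have msmul : ∀ x y : A,
      (⨅ i, μ (φ.symm x i)) + (⨅ i, μ (φ.symm y i)) + ((-E : ℝ) : EReal)
        ≤ ⨅ i, μ (φ.symm (x * y) i) := by
    intro x y
    have hxy : x * y = ∑ i, ∑ j, (φ.symm x i * φ.symm y j) • (e i * e j) := by
      conv_lhs => rw [decomp x, decomp y]
      rw [Finset.sum_mul_sum]
      exact Finset.sum_congr rfl fun i _ =>
        Finset.sum_congr rfl fun j _ => smul_mul_smul_comm _ _ _ _
    rw [hxy]
    refine statement3_le_pv_sum (fun z : A => ⨅ i, μ (φ.symm z i)) ms0 msadd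
      Finset.univ _ _ fun i _ => ?_
    refine statement3_le_pv_sum (fun z : A => ⨅ i, μ (φ.symm z i)) ms0 msadd
      Finset.univ _ _ fun j _ => ?_
    calc (⨅ i, μ (φ.symm x i)) + (⨅ i, μ (φ.symm y i)) + ((-E : ℝ) : EReal)
        ≤ (μ (φ.symm x i) + μ (φ.symm y j)) + (⨅ i', μ (φ.symm (e i * e j) i')) :=
          add_le_add (add_le_add (iInf_le _ i) (iInf_le _ j)) (hE2 i j)
      _ ≤ μ (φ.symm x i * φ.symm y j) + (⨅ i', μ (φ.symm (e i * e j) i')) :=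
          add_le_add_left (hμmul _ _) _
      _ ≤ ⨅ i', μ (φ.symm ((φ.symm x i * φ.symm y j) • (e i * e j)) i') := mssmul _ _
  -- facts about the weighted degree pseudovaluation ν
  have wdeg_le : ∀ (p : MvPolynomial (Fin m) R) (k : Fin m →₀ ℕ),
      weightedDegPV μ d p ≤ μ (p.coeff k) - ((∑ j, (k j : ℝ) * d j : ℝ) : EReal) :=
    fun p k => iInf_le _ k
  have le_wdeg : ∀ (p : MvPolynomial (Fin m) R) (b : EReal),
      (∀ k : Fin m →₀ ℕ, b ≤ μ (p.coeff k) - ((∑ j, (k j : ℝ) * d j : ℝ) : EReal)) →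
      b ≤ weightedDegPV μ d p := fun p b h => le_iInf h
  have ν0 : (⊤ : EReal) ≤ weightedDegPV μ d 0 := by
    refine le_wdeg _ _ fun k => ?_
    rw [MvPolynomial.coeff_zero, hpv.map_zero, EReal.top_sub_coe]
  have νadd : ∀ p q : MvPolynomial (Fin m) R,
      min (weightedDegPV μ d p) (weightedDegPV μ d q) ≤ weightedDegPV μ d (p + q) := by
    intro p q
    refine le_wdeg _ _ fun k => ?_
    rw [MvPolynomial.coeff_add]
    rcases le_total (μ (p.coeff k)) (μ (q.coeff k)) with h | h
    · have h2 : μ (p.coeff k) ≤ μ (p.coeff k + q.coeff k) :=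
        le_trans (le_of_eq (min_eq_left h).symm) (hμadd _ _)
      exact le_trans (min_le_left _ _) (le_trans (wdeg_le p k) (add_le_add_left h2 _))
    · have h2 : μ (q.coeff k) ≤ μ (p.coeff k + q.coeff k) :=
        le_trans (le_of_eq (min_eq_right h).symm) (hμadd _ _)
      exact le_trans (min_le_right _ _) (le_trans (wdeg_le q k) (add_le_add_left h2 _))
  have νsmul : ∀ (r : R) (p : MvPolynomial (Fin m) R),
      μ r + weightedDegPV μ d p ≤ weightedDegPV μ d (r • p) := by
    intro r p
    refine le_wdeg _ _ fun k => ?_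
    rw [MvPolynomial.coeff_smul, smul_eq_mul]
    calc μ r + weightedDegPV μ d p
        ≤ μ r + (μ (p.coeff k) - ((∑ j, (k j : ℝ) * d j : ℝ) : EReal)) :=
          add_le_add_right (wdeg_le p k) _
      _ = (μ r + μ (p.coeff k)) - ((∑ j, (k j : ℝ) * d j : ℝ) : EReal) :=
          (add_assoc _ _ _).symm
      _ ≤ μ (r * p.coeff k) - ((∑ j, (k j : ℝ) * d j : ℝ) : EReal) :=
          add_le_add_left (hμmul _ _) _
  have νlb : ∀ p : MvPolynomial (Fin m) R, ∃ L : ℝ, (L : EReal) ≤ weightedDegPV μ d p := by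
    intro p
    obtain ⟨L, hL⟩ := statement3_ereal_lb p.support
      (fun k => μ (p.coeff k) - ((∑ j, (k j : ℝ) * d j : ℝ) : EReal))
      (fun k _ => statement3_sub_real_ne_bot (hbot _) _)
    refine ⟨L, le_wdeg _ _ fun k => ?_⟩
    by_cases hk : k ∈ p.support
    · exact hL k hk
    · rw [MvPolynomial.notMem_support_iff.mp hk, hpv.map_zero, EReal.top_sub_coe]
      exact le_top
  -- images of the variables, and the constants O and M
  obtain ⟨t, ht⟩ : ∃ t : Fin m → A, ∀ j, t j = π (MvPolynomial.X j) := ⟨_, fun _ => rfl⟩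
  choose ltj hltj using fun j => mslb (t j)
  obtain ⟨l1, hl1⟩ := mslb (1 : A)
  obtain ⟨O, hOdef⟩ : ∃ O : ℝ, O = max 0 (-l1) := ⟨_, rfl⟩
  have hO0 : 0 ≤ O := hOdef ▸ le_max_left _ _
  have hms1 : ((-O : ℝ) : EReal) ≤ ⨅ i, μ (φ.symm (1 : A) i) := by
    refine le_trans (EReal.coe_le_coe_iff.mpr ?_) hl1
    have := le_max_right (0:ℝ) (-l1)
    rw [hOdef]; linarith
  have hmst : ∀ j, ((-(max 0 (-ltj j)) : ℝ) : EReal) ≤ ⨅ i, μ (φ.symm (t j) i) :=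
    fun j => le_trans (EReal.coe_le_coe_iff.mpr
      (by have := le_max_right (0:ℝ) (-ltj j); linarith)) (hltj j)
  obtain ⟨M, hM⟩ : ∃ M : Fin m → ℝ, ∀ j, M j = max 0 (-ltj j) + 2*E + O := ⟨_, fun _ => rfl⟩
  have hM0 : ∀ j, 0 ≤ M j := by
    intro j; rw [hM j]
    have := le_max_left (0:ℝ) (-ltj j); linarith
  -- bound on powers of the tⱼ
  have hpow : ∀ (j : Fin m) (b : ℕ),
      ((-O - (b : ℝ) * (max 0 (-ltj j) + E) : ℝ) : EReal) ≤ ⨅ i, μ (φ.symm (t j ^ b) i) := by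
    intro j b
    induction b with
    | zero =>
        rw [pow_zero]
        have h1 : (-O - ((0:ℕ) : ℝ) * (max 0 (-ltj j) + E) : ℝ) = -O := by push_cast; ring
        rw [h1]; exact hms1
    | succ b ih =>
        rw [pow_succ]
        refine le_trans ?_ (msmul (t j ^ b) (t j))
        have h1 : (-O - ((b+1:ℕ) : ℝ) * (max 0 (-ltj j) + E) : ℝ)
            = (-O - (b : ℝ) * (max 0 (-ltj j) + E)) + (-(max 0 (-ltj j))) + (-E) := by
          push_cast; ring
        rw [h1, EReal.coe_add, EReal.coe_add]
        exact add_le_add (add_le_add ih (hmst j)) le_rfl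
  -- bound on monomials
  have hmon : ∀ k : Fin m →₀ ℕ,
      ((-O - ∑ j, (k j : ℝ) * M j : ℝ) : EReal)
        ≤ ⨅ i, μ (φ.symm (π (MvPolynomial.monomial k 1)) i) := by
    intro k
    induction k using Finsupp.induction with
    | zero =>
        have h1 : (-O - ∑ j, (((0 : Fin m →₀ ℕ) j : ℕ) : ℝ) * M j : ℝ) = -O := by simp
        rw [h1]
        have h2 : (MvPolynomial.monomial (0 : Fin m →₀ ℕ) (1:R)) = 1 := by simp
        rw [h2, map_one]
        exact hms1
    | single_add a b f hf hb ih =>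
        have hsum : (∑ j, (((Finsupp.single a b + f) j : ℕ) : ℝ) * M j)
            = (b : ℝ) * M a + ∑ j, ((f j : ℕ) : ℝ) * M j := by
          have h1 : ∀ j : Fin m, (((Finsupp.single a b + f) j : ℕ) : ℝ) * M j
              = (if a = j then (b : ℝ) * M j else 0) + ((f j : ℕ) : ℝ) * M j := by
            intro j
            rw [Finsupp.add_apply, Finsupp.single_apply]
            split_ifs with h
            · push_cast; ring
            · push_cast; ring
          rw [Finset.sum_congr rfl fun j _ => h1 j, Finset.sum_add_distrib,
            Finset.sum_ite_eq]
          simp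
        rw [hsum]
        have hmono : MvPolynomial.monomial (Finsupp.single a b + f) (1:R)
            = MvPolynomial.X a ^ b * MvPolynomial.monomial f 1 := by
          rw [MvPolynomial.monomial_single_add]
        rw [hmono, map_mul, map_pow, ← ht a]
        refine le_trans ?_ (msmul (t a ^ b) (π (MvPolynomial.monomial f 1)))
        have hb1 : (1 : ℝ) ≤ (b : ℝ) := by exact_mod_cast Nat.one_le_iff_ne_zero.mpr hb
        have hreal : (-O - ((b : ℝ) * M a + ∑ j, ((f j : ℕ) : ℝ) * M j) : ℝ)
            ≤ ((-O - (b : ℝ) * (max 0 (-ltj a) + E)) + (-O - ∑ j, ((f j : ℕ) : ℝ) * M j))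
              + (-E) := by
          have hMa := hM a
          nlinarith [hE0, hO0]
        refine le_trans (EReal.coe_le_coe_iff.mpr hreal) ?_
        rw [EReal.coe_add, EReal.coe_add]
        exact add_le_add (add_le_add (hpow a b) ih) le_rfl
  have hmonc : ∀ (k : Fin m →₀ ℕ) (c : R),
      μ c + ((-O - ∑ j, (k j : ℝ) * M j : ℝ) : EReal)
        ≤ ⨅ i, μ (φ.symm (π (MvPolynomial.monomial k c)) i) := by
    intro k c
    have h1 : MvPolynomial.monomial k c = c • MvPolynomial.monomial k (1:R) := by
      rw [MvPolynomial.smul_monomial, smul_eq_mul, mul_one]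
    rw [h1, map_smul]
    exact le_trans (add_le_add_right (hmon k) _) (mssmul _ _)
  -- the constant C
  obtain ⟨C, hCdef⟩ : ∃ C : ℝ, C = 1 + ∑ j, M j / d j := ⟨_, rfl⟩
  have hC1 : 1 ≤ C := by
    rw [hCdef]
    have : 0 ≤ ∑ j, M j / d j :=
      Finset.sum_nonneg fun j _ => div_nonneg (hM0 j) (hd j).le
    linarith
  have hC0 : (0:ℝ) < C := lt_of_lt_of_le one_pos hC1
  have hCd : ∀ j, M j ≤ C * d j := by
    intro j
    have h1 : M j / d j ≤ ∑ i, M i / d i :=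
      Finset.single_le_sum (fun i _ => div_nonneg (hM0 i) (hd i).le) (Finset.mem_univ j)
    have h2 : M j / d j ≤ C := by rw [hCdef]; linarith
    calc M j = (M j / d j) * d j := (div_mul_cancel₀ (M j) (hd j).ne').symm
      _ ≤ C * d j := mul_le_mul_of_nonneg_right h2 (hd j).le
  -- direction 2 : C * τ a - O ≤ μⁿ a
  have dir2 : ∀ a : A, (C : EReal) * τ a - ((O : ℝ) : EReal) ≤ ⨅ i, μ (φ.symm a i) := by
    intro a
    by_cases ha : a = 0
    · subst ha
      exact le_trans le_top ms0
    · obtain ⟨i₀, hi₀⟩ : ∃ i, φ.symm a i ≠ 0 := by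
        have h : φ.symm a ≠ 0 := by
          intro h
          apply ha
          have h2 := congrArg φ h
          rwa [LinearEquiv.apply_symm_apply, map_zero] at h2
        exact Function.ne_iff.mp h
      have hms_le0 : (⨅ i, μ (φ.symm a i)) ≤ 0 := le_trans (iInf_le _ i₀) (hneg _ hi₀)
      obtain ⟨x0, hx0⟩ := mslb a
      have hne_top : (⨅ i, μ (φ.symm a i)) ≠ ⊤ := ne_top_of_le_ne_top (by simp) hms_le0
      have hne_bot : (⨅ i, μ (φ.symm a i)) ≠ ⊥ := by
        intro h
        rw [h] at hx0
        exact EReal.coe_ne_bot x0 (le_bot_iff.mp hx0)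
      obtain ⟨t', ht'⟩ : ∃ t' : ℝ, (⨅ i, μ (φ.symm a i)) = (t' : EReal) :=
        ⟨_, (EReal.coe_toReal hne_top hne_bot).symm⟩
      have hub : ∀ p : MvPolynomial (Fin m) R, π p = a →
          weightedDegPV μ d p ≤ (((t' + O) / C : ℝ) : EReal) := by
        intro p hp
        have hp0 : p ≠ 0 := by
          rintro rfl
          rw [map_zero] at hp
          exact ha hp.symm
        have hS : p.support.Nonempty := MvPolynomial.support_nonempty.mpr hp0
        by_cases hνbot : weightedDegPV μ d p = ⊥
        · rw [hνbot]; exact bot_le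
        obtain ⟨w, hw⟩ : ∃ w : (Fin m →₀ ℕ) → ℝ,
            ∀ k, w k = (μ (p.coeff k)).toReal - O - ∑ j, (k j : ℝ) * M j := ⟨_, fun _ => rfl⟩
        have hmsge : ((p.support.inf' hS w : ℝ) : EReal) ≤ ⨅ i, μ (φ.symm a i) := by
          have hdecomp : a = ∑ k ∈ p.support, π (MvPolynomial.monomial k (p.coeff k)) := by
            rw [← hp, ← map_sum, MvPolynomial.support_sum_monomial_coeff]
          rw [hdecomp]
          refine statement3_le_pv_sum (fun z : A => ⨅ i, μ (φ.symm z i)) ms0 msadd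
            p.support _ _ fun k hk => ?_
          have hck : p.coeff k ≠ 0 := MvPolynomial.mem_support_iff.mp hk
          obtain ⟨u, hu0, hu⟩ := hμreal _ hck
          refine le_trans ?_ (hmonc k (p.coeff k))
          rw [hu, ← EReal.coe_add]
          apply EReal.coe_le_coe_iff.mpr
          have h2 := Finset.inf'_le w hk
          rw [hw k, hu, EReal.toReal_coe] at h2
          linarith
        obtain ⟨k0, hk0, hinf⟩ := Finset.exists_mem_eq_inf' hS w
        have ht'ge : w k0 ≤ t' := by
          rw [← hinf]
          exact EReal.coe_le_coe_iff.mp (ht' ▸ hmsge)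
        have hck0 : p.coeff k0 ≠ 0 := MvPolynomial.mem_support_iff.mp hk0
        obtain ⟨u, hu0, hu⟩ := hμreal _ hck0
        have hwt0 : (0:ℝ) ≤ ∑ j, (k0 j : ℝ) * d j :=
          Finset.sum_nonneg fun j _ => mul_nonneg (Nat.cast_nonneg _) (hd j).le
        have hν_le : weightedDegPV μ d p ≤ ((u - ∑ j, (k0 j : ℝ) * d j : ℝ) : EReal) := by
          have h := wdeg_le p k0
          rw [hu, ← EReal.coe_sub] at h
          exact h
        have hνtop : weightedDegPV μ d p ≠ ⊤ := ne_top_of_le_ne_top (EReal.coe_ne_top _) hν_le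
        obtain ⟨v, hv⟩ : ∃ v : ℝ, weightedDegPV μ d p = (v : EReal) :=
          ⟨_, (EReal.coe_toReal hνtop hνbot).symm⟩
        rw [hv]
        apply EReal.coe_le_coe_iff.mpr
        have hv_le : v ≤ u - ∑ j, (k0 j : ℝ) * d j := EReal.coe_le_coe_iff.mp (hv ▸ hν_le)
        have hwk0 : w k0 = u - O - ∑ j, (k0 j : ℝ) * M j := by
          rw [hw k0, hu, EReal.toReal_coe]
        have ht'w : u - O - ∑ j, (k0 j : ℝ) * M j ≤ t' := hwk0 ▸ ht'ge
        rw [le_div_iff₀ hC0]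
        have hSM : ∑ j, (k0 j : ℝ) * M j ≤ C * ∑ j, (k0 j : ℝ) * d j := by
          rw [Finset.mul_sum]
          refine Finset.sum_le_sum fun j _ => ?_
          have h := hCd j
          have hk0j : (0:ℝ) ≤ (k0 j : ℝ) := Nat.cast_nonneg _
          nlinarith
        have h1 : C * v ≤ C * u - C * ∑ j, (k0 j : ℝ) * d j := by
          have := mul_le_mul_of_nonneg_left hv_le hC0.le
          rw [mul_sub] at this
          exact this
        have h2 : C * u - u ≤ 0 := by nlinarith
        linarith
      have hτle : τ a ≤ (((t' + O) / C : ℝ) : EReal) := by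
        rw [hτeq]
        exact iSup₂_le hub
      rw [ht']
      rcases eq_or_ne (τ a) ⊥ with hτb | hτb
      · rw [hτb, EReal.mul_bot_of_pos (EReal.coe_pos.mpr hC0), EReal.bot_sub]
        exact bot_le
      · have hτtop : τ a ≠ ⊤ := ne_top_of_le_ne_top (EReal.coe_ne_top _) hτle
        obtain ⟨s, hs⟩ : ∃ s : ℝ, τ a = (s : EReal) :=
          ⟨_, (EReal.coe_toReal hτtop hτb).symm⟩
        rw [hs, ← EReal.coe_mul, ← EReal.coe_sub]
        apply EReal.coe_le_coe_iff.mpr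
        have hsle : s ≤ (t' + O) / C := EReal.coe_le_coe_iff.mp (hs ▸ hτle)
        rw [le_div_iff₀ hC0] at hsle
        linarith
  -- direction 1 : μⁿ a - K ≤ τ a
  choose g hg using fun i => hπ (e i)
  choose L1 hL1 using fun i => νlb (g i)
  obtain ⟨K, hKdef⟩ : ∃ K : ℝ, K = ∑ i, max 0 (-(L1 i)) := ⟨_, rfl⟩
  have hK0 : 0 ≤ K := hKdef ▸ Finset.sum_nonneg fun i _ => le_max_left _ _
  have hνg : ∀ i, ((-K : ℝ) : EReal) ≤ weightedDegPV μ d (g i) := by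
    intro i
    have h1 : max 0 (-(L1 i)) ≤ K := by
      rw [hKdef]
      exact Finset.single_le_sum (f := fun p => max 0 (-(L1 p)))
        (fun p _ => le_max_left _ _) (Finset.mem_univ i)
    have h2 : -(max 0 (-(L1 i))) ≤ L1 i := neg_le.mpr (le_max_right _ _)
    exact le_trans (EReal.coe_le_coe_iff.mpr (by linarith)) (hL1 i)
  have dir1 : ∀ a : A,
      ((1 : ℝ) : EReal) * (⨅ i, μ (φ.symm a i)) - ((K : ℝ) : EReal) ≤ τ a := by
    intro a
    rw [EReal.coe_one, one_mul, sub_eq_add_neg, ← EReal.coe_neg]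
    have hfa : π (∑ i, φ.symm a i • g i) = a := by
      rw [map_sum]
      simp_rw [map_smul, hg]
      exact (decomp a).symm
    rw [hτeq]
    refine le_trans ?_
      (le_iSup₂ (f := fun p (_ : π p = a) => weightedDegPV μ d p) _ hfa)
    refine statement3_le_pv_sum (weightedDegPV μ d) ν0 νadd Finset.univ
      (fun i => φ.symm a i • g i) _ fun i _ => ?_
    refine le_trans ?_ (νsmul (φ.symm a i) (g i))
    exact add_le_add (iInf_le _ i) (hνg i)
  exact ⟨C, 1, O, K, hC0, one_pos, hO0, hK0, dir1, dir2⟩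
end
end

section
/- Let (A, ν) be a commutative ring with a negative pseudovaluation, let f ∈ A be a non-zero divisor, and let d > 0; let ν' be the induced pseudovaluation on the localization A_f. Define τ : A_f → ℝ ∪ {∞} by τ(z) = sup{ ν(a) − m·d : a ∈ A, m ∈ ℕ, z = a/f^m in A_f }. Then there exists a real constant Q > 0 such that ν'(z) ≥ τ(z) ≥ Q·ν'(z) for all z ∈ A_f. -/
open scoped Classical

noncomputable section

section Aux

variable {A : Type*} [CommRing A] {ν : A → EReal}

lemma pv_le_neg (h : IsPseudovaluation ν) (a : A) : ν a ≤ ν (-a) := by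
  have := h.min_le_sub 0 a
  simpa [h.map_zero] using this

lemma pv_min_le_add (h : IsPseudovaluation ν) (a b : A) : min (ν a) (ν b) ≤ ν (a + b) := by
  have h1 := h.min_le_sub a (-b)
  have h2 := pv_le_neg h b
  have h3 : min (ν a) (ν b) ≤ min (ν a) (ν (-b)) :=
    le_min (min_le_left _ _) (le_trans (min_le_right _ _) h2)
  simpa [sub_neg_eq_add] using le_trans h3 h1

lemma pv_le_sum (h : IsPseudovaluation ν) {ι : Type*} (s : Finset ι) (g : ι → A) (V : EReal)
    (hV : ∀ i ∈ s, V ≤ ν (g i)) : V ≤ ν (∑ i ∈ s, g i) := by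
  classical
  induction s using Finset.cons_induction with
  | empty => simp [h.map_zero]
  | cons i s his ih =>
    rw [Finset.sum_cons]
    refine le_trans ?_ (pv_min_le_add h _ _)
    exact le_min (hV i (by simp)) (ih fun j hj => hV j (by simp [hj]))

lemma pv_pow (h : IsPseudovaluation ν) (hb : ∀ a : A, ν a ≠ ⊥) {f : A} {r : ℝ}
    (hr : (r : EReal) ≤ ν f) (k : ℕ) : (((k : ℝ) * r : ℝ) : EReal) ≤ ν (f ^ k) := by
  induction k with
  | zero => simp [h.map_one]
  | succ k ih =>
    have hmul := h.add_le_mul (f ^ k) f (hb _) (hb _)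
    calc ((((k + 1 : ℕ) : ℝ) * r : ℝ) : EReal)
        = (((k : ℝ) * r : ℝ) : EReal) + (r : EReal) := by
          have : ((k + 1 : ℕ) : ℝ) * r = (k : ℝ) * r + r := by push_cast; ring
          rw [this, EReal.coe_add]
      _ ≤ ν (f ^ k) + ν f := add_le_add ih hr
      _ ≤ ν (f ^ k * f) := hmul
      _ = ν (f ^ (k + 1)) := by rw [pow_succ]

lemma real_key {d r v : ℝ} (hd : 0 < d) (hr : r ≤ 0) (n : ℝ) (hn : 0 ≤ n)
    (hv : v ≤ -(n * d)) : (2 * d - r) / d * v ≤ v + n * r - n * d := by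
  rw [div_mul_eq_mul_div, div_le_iff₀ hd]
  nlinarith [mul_nonneg (by linarith : (0:ℝ) ≤ -v - n * d) (by linarith : (0:ℝ) ≤ d - r)]

end Aux

/-- For a non-zero divisor `f` and `d > 0`, the function
`τ(z) = sup { ν(a) - m d : z = a/f^m }` satisfies `ν'(z) ≥ τ(z) ≥ Q ν'(z)` for some
constant `Q > 0`, where `ν'` is the induced pseudovaluation on `A_f`. -/
theorem statement4 (A : Type*) [CommRing A]
    (ν : A → EReal) (hν : IsNegativePV ν)
    (f : A) (hf : f ∈ nonZeroDivisors A) (d : ℝ) (hd : 0 < d) :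
    ∃ Q : ℝ, 0 < Q ∧ ∀ z : Localization.Away f,
      (⨆ (q : A × ℕ) (_ : algebraMap A (Localization.Away f) q.1
          = algebraMap A (Localization.Away f) (f ^ q.2) * z),
        (ν q.1 - (((q.2 : ℝ) * d : ℝ) : EReal))) ≤ locPV ν f d z ∧
      (Q : EReal) * locPV ν f d z ≤
      (⨆ (q : A × ℕ) (_ : algebraMap A (Localization.Away f) q.1
          = algebraMap A (Localization.Away f) (f ^ q.2) * z),
        (ν q.1 - (((q.2 : ℝ) * d : ℝ) : EReal))) := by
  obtain ⟨hpv, hbot, hneg⟩ := hν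
  have h10 : (1 : A) ≠ 0 := by
    intro h
    have h1 := hpv.map_one
    rw [h, hpv.map_zero] at h1
    simp at h1
  have hf0 : f ≠ 0 := by
    rintro rfl
    exact h10 ((mem_nonZeroDivisors_iff_right.mp hf) 1 (by simp))
  have hfneg : ν f ≤ 0 := hneg f hf0
  have hftop : ν f ≠ ⊤ := fun h => by simp [h] at hfneg
  set r : ℝ := (ν f).toReal with hrdef
  have hrf : (r : EReal) = ν f := EReal.coe_toReal hftop (hbot f)
  have hr0 : r ≤ 0 := by
    have : (r : EReal) ≤ ((0 : ℝ) : EReal) := by rw [hrf]; simpa using hfneg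
    exact_mod_cast this
  refine ⟨(2 * d - r) / d, div_pos (by linarith) hd, fun z => ?_⟩
  set u : Localization.Away f := IsLocalization.Away.invSelf (S := Localization.Away f) f with hu
  set φ := algebraMap A (Localization.Away f) with hφ
  have hfu : φ f * u = 1 := IsLocalization.Away.mul_invSelf f
  constructor
  · -- τ ≤ ν'
    refine iSup₂_le fun q hq => ?_
    have hmon : Polynomial.aeval u ((Polynomial.monomial q.2) q.1) = z := by
      rw [Polynomial.aeval_monomial]
      have h2 : φ (f ^ q.2) * u ^ q.2 = 1 := by
        rw [map_pow, ← mul_pow, hfu, one_pow]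
      calc φ q.1 * u ^ q.2 = φ (f ^ q.2) * z * u ^ q.2 := by rw [hq]
        _ = φ (f ^ q.2) * u ^ q.2 * z := by ring
        _ = z := by rw [h2, one_mul]
    refine le_trans ?_ (le_iSup₂_of_le ((Polynomial.monomial q.2) q.1) hmon le_rfl)
    refine le_iInf fun i => ?_
    by_cases hi : q.2 = i
    · subst hi
      simp [Polynomial.coeff_monomial]
    · rw [Polynomial.coeff_monomial, if_neg hi, hpv.map_zero, EReal.top_sub_coe]
      exact le_top
  · -- Q ν' ≤ τ
    have hQ0 : (0 : EReal) < (((2 * d - r) / d : ℝ) : EReal) := by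
      exact_mod_cast div_pos (by linarith : (0:ℝ) < 2 * d - r) hd
    rw [mul_comm, ← EReal.le_div_iff_mul_le hQ0 (by simp)]
    refine iSup₂_le fun g hg => ?_
    rw [EReal.le_div_iff_mul_le hQ0 (by simp)]
    by_cases hg0 : g = 0
    · subst hg0
      have hz : z = 0 := by simpa using hg.symm
      have htop : (⊤ : EReal) ≤ ⨆ (q : A × ℕ) (_ : φ q.1 = φ (f ^ q.2) * z),
          (ν q.1 - (((q.2 : ℝ) * d : ℝ) : EReal)) := by
        refine le_iSup₂_of_le ((0 : A), (0 : ℕ)) (by simp [hz]) ?_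
        simp [hpv.map_zero, EReal.top_sub_coe]
      exact le_trans le_top htop
    · set n := g.natDegree with hn
      have hlead : g.coeff n ≠ 0 := Polynomial.leadingCoeff_ne_zero.mpr hg0
      -- the representative a = Σ c_i f^(n-i)
      have hrep : φ (∑ i ∈ Finset.range (n + 1), g.coeff i * f ^ (n - i))
          = φ (f ^ n) * z := by
        rw [← hg, Polynomial.aeval_eq_sum_range' (Nat.lt_succ_of_le le_rfl) u, map_sum,
          Finset.mul_sum]
        refine Finset.sum_congr rfl fun i hi => ?_
        have hin : i ≤ n := Nat.lt_succ_iff.mp (Finset.mem_range.mp hi)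
        simp only [map_mul, map_pow, Algebra.smul_def]
        have hsplit : (φ f) ^ n = (φ f) ^ (n - i) * (φ f) ^ i := by
          rw [← pow_add, Nat.sub_add_cancel hin]
        have h1 : (φ f) ^ i * u ^ i = 1 := by rw [← mul_pow, hfu, one_pow]
        rw [hsplit, show (φ f) ^ (n - i) * (φ f) ^ i * (φ (g.coeff i) * u ^ i)
            = φ (g.coeff i) * (φ f) ^ (n - i) * ((φ f) ^ i * u ^ i) from by ring, h1, mul_one]
      -- the value V = polyPV ν d g is a real number
      have hVle : ∀ i : ℕ, polyPV ν d g ≤ ν (g.coeff i) - (((i : ℝ) * d : ℝ) : EReal) :=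
        fun i => iInf_le _ i
      have htbot : ∀ i : ℕ, ν (g.coeff i) - (((i : ℝ) * d : ℝ) : EReal) ≠ ⊥ := by
        intro i hb
        rw [sub_eq_add_neg] at hb
        rcases EReal.add_eq_bot_iff.mp hb with h | h
        · exact hbot _ h
        · rw [← EReal.coe_neg] at h
          exact EReal.coe_ne_bot _ h
      have hne : (Finset.range (n + 1)).Nonempty := ⟨0, by simp⟩
      have hVbot : polyPV ν d g ≠ ⊥ := by
        intro hb
        obtain ⟨i0, hi0, hB⟩ := Finset.exists_mem_eq_inf' hne
          (fun i => ν (g.coeff i) - (((i : ℝ) * d : ℝ) : EReal))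
        have hBle : (Finset.range (n + 1)).inf' hne
            (fun i => ν (g.coeff i) - (((i : ℝ) * d : ℝ) : EReal)) ≤ polyPV ν d g := by
          refine le_iInf fun i => ?_
          by_cases hi : i < n + 1
          · exact Finset.inf'_le _ (Finset.mem_range.mpr hi)
          · have hc : g.coeff i = 0 :=
              Polynomial.coeff_eq_zero_of_natDegree_lt (by omega)
            rw [hc, hpv.map_zero, EReal.top_sub_coe]
            exact le_top
        rw [hb, le_bot_iff, hB] at hBle
        exact htbot i0 hBle
      have hVn : polyPV ν d g ≤ ((-((n : ℝ) * d) : ℝ) : EReal) := by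
        refine le_trans (hVle n) ?_
        have h0 : ν (g.coeff n) ≤ (0 : EReal) := hneg _ hlead
        calc ν (g.coeff n) - (((n : ℝ) * d : ℝ) : EReal)
            ≤ (0 : EReal) - (((n : ℝ) * d : ℝ) : EReal) := EReal.sub_le_sub h0 le_rfl
          _ = ((-((n : ℝ) * d) : ℝ) : EReal) := by
              rw [← EReal.coe_zero, ← EReal.coe_sub]; norm_num
      have hVtop : polyPV ν d g ≠ ⊤ := by
        intro h
        rw [h, top_le_iff] at hVn
        exact EReal.coe_ne_top _ hVn
      set v : ℝ := (polyPV ν d g).toReal with hvdef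
      have hv : (v : EReal) = polyPV ν d g := EReal.coe_toReal hVtop hVbot
      have hvnd : v ≤ -((n : ℝ) * d) := by
        have := hVn; rw [← hv] at this; exact_mod_cast this
      -- lower bound for ν of the representative
      have hstep1 : ((v + (n : ℝ) * r : ℝ) : EReal)
          ≤ ν (∑ i ∈ Finset.range (n + 1), g.coeff i * f ^ (n - i)) := by
        refine pv_le_sum hpv _ _ _ (fun i hi => ?_)
        have hin : i ≤ n := Nat.lt_succ_iff.mp (Finset.mem_range.mp hi)
        have h1 : ((v + (i : ℝ) * d : ℝ) : EReal) ≤ ν (g.coeff i) := by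
          have h' := EReal.add_le_of_le_sub (hVle i)
          rw [← hv, ← EReal.coe_add] at h'
          exact h'
        have h2 : ((((n - i : ℕ) : ℝ) * r : ℝ) : EReal) ≤ ν (f ^ (n - i)) :=
          pv_pow hpv hbot (le_of_eq hrf) _
        have h3 := hpv.add_le_mul (g.coeff i) (f ^ (n - i)) (hbot _) (hbot _)
        refine le_trans ?_ (le_trans (add_le_add h1 h2) h3)
        rw [← EReal.coe_add]
        apply EReal.coe_le_coe_iff.mpr
        have hcast : ((n - i : ℕ) : ℝ) = (n : ℝ) - (i : ℝ) := by
          rw [Nat.cast_sub hin]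
        rw [hcast]
        nlinarith [mul_nonneg (Nat.cast_nonneg (α := ℝ) i) (by linarith : (0:ℝ) ≤ d - r)]
      refine le_trans ?_ (le_iSup₂_of_le
        ((∑ i ∈ Finset.range (n + 1), g.coeff i * f ^ (n - i), n) : A × ℕ) hrep le_rfl)
      calc polyPV ν d g * (((2 * d - r) / d : ℝ) : EReal)
          = ((v * ((2 * d - r) / d) : ℝ) : EReal) := by rw [← hv, ← EReal.coe_mul]
        _ ≤ ((v + (n : ℝ) * r - (n : ℝ) * d : ℝ) : EReal) := by
            apply EReal.coe_le_coe_iff.mpr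
            have := real_key hd hr0 (n : ℝ) (Nat.cast_nonneg n) hvnd
            linarith [this]
        _ = ((v + (n : ℝ) * r : ℝ) : EReal) - (((n : ℝ) * d : ℝ) : EReal) := by
            rw [← EReal.coe_sub]
        _ ≤ ν (∑ i ∈ Finset.range (n + 1), g.coeff i * f ^ (n - i))
              - (((n : ℝ) * d : ℝ) : EReal) := EReal.sub_le_sub hstep1 le_rfl
end
end

section
/- Let (B, μ) be a commutative ring with a negative pseudovaluation, let d > 0, and equip B[T] with the pseudovaluation ν(Σ_i a_i T^i) = min_i { μ(a_i) − i·d }. If f ∈ B[T] is a monic polynomial of degree m which is regular with respect to T, then for every polynomial g ∈ B[T] one has ν(f·g) = ν(f) + ν(g). Consequently, every monic polynomial in B[T] is localizing with respect to ν (for every choice of d > 0). -/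
open scoped Classical

noncomputable section

namespace S5aux

variable {B : Type*} [CommRing B] {μ : B → EReal}

lemma pv_neg (hμ : IsNegativePV μ) (a : B) : μ (-a) = μ a := by
  have h1 : ∀ b : B, μ b ≤ μ (-b) := by
    intro b
    have := hμ.1.min_le_sub 0 b
    simpa [hμ.1.map_zero] using this
  refine le_antisymm ?_ (h1 a)
  simpa using h1 (-a)

lemma pv_add (hμ : IsNegativePV μ) (a b : B) : min (μ a) (μ b) ≤ μ (a + b) := by
  have := hμ.1.min_le_sub a (-b)
  simpa [pv_neg hμ, sub_neg_eq_add] using this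

lemma pv_sum_le (hμ : IsNegativePV μ) {ι : Type*} (s : Finset ι) (a : ι → B) (c : EReal)
    (hc : ∀ i ∈ s, c ≤ μ (a i)) : c ≤ μ (∑ i ∈ s, a i) := by
  classical
  induction s using Finset.induction_on with
  | empty => simpa [hμ.1.map_zero] using le_top
  | @insert x s' hni ih =>
    rw [Finset.sum_insert hni]
    refine le_trans ?_ (pv_add hμ _ _)
    exact le_min (hc x (Finset.mem_insert_self _ _))
      (ih fun i hi => hc i (Finset.mem_insert_of_mem hi))

lemma pv_sum_lt (hμ : IsNegativePV μ) {ι : Type*} (s : Finset ι) (a : ι → B) (c : ℝ)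
    (hc : ∀ i ∈ s, (c : EReal) < μ (a i)) : (c : EReal) < μ (∑ i ∈ s, a i) := by
  classical
  induction s using Finset.induction_on with
  | empty => simpa [hμ.1.map_zero] using EReal.coe_lt_top c
  | @insert x s' hni ih =>
    rw [Finset.sum_insert hni]
    refine lt_of_lt_of_le ?_ (pv_add hμ _ _)
    exact lt_min (hc x (Finset.mem_insert_self _ _))
      (ih fun i hi => hc i (Finset.mem_insert_of_mem hi))

/-- abbreviation for a single term -/
def term (μ : B → EReal) (d : ℝ) (g : Polynomial B) (i : ℕ) : EReal :=
  μ (g.coeff i) - (((i : ℝ) * d : ℝ) : EReal)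

lemma polyPV_eq_iInf (d : ℝ) (g : Polynomial B) : polyPV μ d g = ⨅ i : ℕ, term μ d g i := rfl

lemma term_ne_bot (hμ : IsNegativePV μ) (d : ℝ) (g : Polynomial B) (i : ℕ) :
    term μ d g i ≠ ⊥ := by
  have h1 := hμ.2.1 (g.coeff i)
  simp only [term, sub_eq_add_neg, ← EReal.coe_neg]
  intro h
  rcases EReal.add_eq_bot_iff.mp h with h' | h'
  · exact h1 h'
  · exact EReal.coe_ne_bot _ h'

lemma term_top (d : ℝ) (g : Polynomial B) (hμ : IsNegativePV μ) {i : ℕ}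
    (hi : g.natDegree < i) : term μ d g i = ⊤ := by
  rw [term, Polynomial.coeff_eq_zero_of_natDegree_lt hi, hμ.1.map_zero]
  exact EReal.top_sub_coe _

lemma polyPV_eq_inf' (hμ : IsNegativePV μ) (d : ℝ) (g : Polynomial B) :
    polyPV μ d g = (Finset.range (g.natDegree + 1)).inf'
      (Finset.nonempty_range_iff.mpr (Nat.succ_ne_zero _)) (term μ d g) := by
  apply le_antisymm
  · obtain ⟨j, hj, hje⟩ := Finset.exists_mem_eq_inf'
      (Finset.nonempty_range_iff.mpr (Nat.succ_ne_zero _)) (term μ d g)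
    rw [hje]; exact iInf_le _ j
  · refine le_iInf fun i => ?_
    by_cases hi : i ≤ g.natDegree
    · exact Finset.inf'_le _ (Finset.mem_range.mpr (Nat.lt_succ_of_le hi))
    · have := term_top (μ := μ) d g hμ (lt_of_not_ge hi)
      rw [show μ (g.coeff i) - (((i : ℝ) * d : ℝ) : EReal) = term μ d g i from rfl, this]
      exact le_top

lemma polyPV_ne_bot (hμ : IsNegativePV μ) (d : ℝ) (g : Polynomial B) :
    polyPV μ d g ≠ ⊥ := by
  rw [polyPV_eq_inf' hμ d g]
  obtain ⟨j, hj, hje⟩ := Finset.exists_mem_eq_inf'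
    (Finset.nonempty_range_iff.mpr (Nat.succ_ne_zero _)) (term μ d g)
  rw [hje]; exact term_ne_bot hμ d g j

lemma polyPV_zero (hμ : IsNegativePV μ) (d : ℝ) : polyPV μ d (0 : Polynomial B) = ⊤ := by
  rw [polyPV_eq_iInf]
  refine le_antisymm le_top (le_iInf fun i => ?_)
  rw [term, Polynomial.coeff_zero, hμ.1.map_zero, EReal.top_sub_coe]

lemma polyPV_ne_top (hμ : IsNegativePV μ) (d : ℝ) {g : Polynomial B} (hg : g ≠ 0) :
    polyPV μ d g ≠ ⊤ := by
  intro h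
  obtain ⟨i, hi⟩ : ∃ i, g.coeff i ≠ 0 := by
    by_contra hc
    push_neg at hc
    exact hg (Polynomial.ext fun n => by simp [hc n])
  have h1 : polyPV μ d g ≤ term μ d g i := iInf_le _ i
  have h2 : term μ d g i ≤ ((0 - i * d : ℝ) : EReal) := by
    rw [term, EReal.coe_sub]
    exact EReal.sub_le_sub (hμ.2.2 _ hi) le_rfl
  rw [h] at h1
  exact (lt_irrefl _ (lt_of_le_of_lt (h1.trans h2) (EReal.coe_lt_top _)))

/-- attainment with maximal index -/
lemma exists_max_attain (hμ : IsNegativePV μ) (d : ℝ) {g : Polynomial B} (hg : g ≠ 0) :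
    ∃ j : ℕ, term μ d g j = polyPV μ d g ∧ ∀ l, j < l → polyPV μ d g < term μ d g l := by
  classical
  set N := g.natDegree
  have hne : (Finset.range (N + 1)).Nonempty := Finset.nonempty_range_iff.mpr (Nat.succ_ne_zero _)
  set S := (Finset.range (N + 1)).filter (fun j => term μ d g j = polyPV μ d g) with hS
  have hSne : S.Nonempty := by
    obtain ⟨j, hj, hje⟩ := Finset.exists_mem_eq_inf' hne (term μ d g)
    exact ⟨j, Finset.mem_filter.mpr ⟨hj, by rw [← hje, ← polyPV_eq_inf' hμ d g]⟩⟩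
  refine ⟨S.max' hSne, (Finset.mem_filter.mp (S.max'_mem hSne)).2, fun l hl => ?_⟩
  have hle : polyPV μ d g ≤ term μ d g l := iInf_le _ l
  rcases lt_or_eq_of_le hle with h | h
  · exact h
  · exfalso
    have hlN : l ≤ N := by
      by_contra hc
      rw [term_top d g hμ (lt_of_not_ge hc)] at h
      exact polyPV_ne_top hμ d hg h
    have : l ∈ S := Finset.mem_filter.mpr ⟨Finset.mem_range.mpr (Nat.lt_succ_of_le hlN), h.symm⟩
    exact absurd (Finset.le_max' S l this) (not_le.mpr hl)

end S5aux

namespace S5aux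

variable {B : Type*} [CommRing B] {μ : B → EReal}

lemma sub_add_cancel_coe (a : EReal) (c : ℝ) : a - (c : EReal) + (c : EReal) = a := by
  rw [sub_eq_add_neg, add_assoc, ← EReal.coe_neg, ← EReal.coe_add]
  simp

lemma coeff_lb (hμ : IsNegativePV μ) (d : ℝ) (g : Polynomial B) (i : ℕ) :
    polyPV μ d g + (((i : ℝ) * d : ℝ) : EReal) ≤ μ (g.coeff i) :=
  EReal.add_le_of_le_sub (iInf_le _ i)

lemma polyPV_mul_ge (hμ : IsNegativePV μ) (d : ℝ) (f g : Polynomial B) :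
    polyPV μ d f + polyPV μ d g ≤ polyPV μ d (f * g) := by
  refine le_iInf fun k => ?_
  rw [EReal.le_sub_iff_add_le (Or.inl (EReal.coe_ne_bot _)) (Or.inl (EReal.coe_ne_top _))]
  rw [Polynomial.coeff_mul]
  refine pv_sum_le hμ _ _ _ fun x hx => ?_
  have hxk : x.1 + x.2 = k := Finset.HasAntidiagonal.mem_antidiagonal.mp hx
  have hco : (((k : ℝ) * d : ℝ) : EReal)
      = (((x.1 : ℝ) * d : ℝ) : EReal) + (((x.2 : ℝ) * d : ℝ) : EReal) := by
    rw [← EReal.coe_add, EReal.coe_eq_coe_iff, ← hxk]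
    push_cast
    ring
  calc polyPV μ d f + polyPV μ d g + (((k : ℝ) * d : ℝ) : EReal)
      = (polyPV μ d f + (((x.1 : ℝ) * d : ℝ) : EReal))
        + (polyPV μ d g + (((x.2 : ℝ) * d : ℝ) : EReal)) := by
        rw [hco, add_add_add_comm]
    _ ≤ μ (f.coeff x.1) + μ (g.coeff x.2) :=
        add_le_add (coeff_lb hμ d f x.1) (coeff_lb hμ d g x.2)
    _ ≤ μ (f.coeff x.1 * g.coeff x.2) := hμ.1.add_le_mul _ _ (hμ.2.1 _) (hμ.2.1 _)

lemma regular_val (hμ : IsNegativePV μ) (d : ℝ) (m : ℕ) (f : Polynomial B)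
    (hmonic : f.Monic) (hdeg : f.natDegree = m)
    (hreg : ∀ i < m, ((-((m : ℝ) * d) : ℝ) : EReal)
      < μ (f.coeff i) - (((i : ℝ) * d : ℝ) : EReal)) :
    polyPV μ d f = ((-((m : ℝ) * d) : ℝ) : EReal) := by
  have hcm : f.coeff m = 1 := by rw [← hdeg]; exact hmonic.coeff_natDegree
  have hterm : term μ d f m = ((-((m : ℝ) * d) : ℝ) : EReal) := by
    rw [term, hcm, hμ.1.map_one]
    rw [show ((-((m : ℝ) * d) : ℝ) : EReal) = -(((m : ℝ) * d : ℝ) : EReal) by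
      rw [← EReal.coe_neg]]
    simp [sub_eq_add_neg]
  apply le_antisymm
  · rw [← hterm]; exact iInf_le _ m
  · refine le_iInf fun i => ?_
    rcases lt_trichotomy i m with h | h | h
    · exact le_of_lt (hreg i h)
    · subst h; rw [← term]; rw [hterm]
    · rw [show μ (f.coeff i) - (((i : ℝ) * d : ℝ) : EReal) = term μ d f i from rfl,
        term_top d f hμ (hdeg ▸ h)]
      exact le_top

lemma key_le (hμ : IsNegativePV μ) (d : ℝ) (m : ℕ) (f : Polynomial B)
    (hmonic : f.Monic) (hdeg : f.natDegree = m)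
    (hreg : ∀ i < m, ((-((m : ℝ) * d) : ℝ) : EReal)
      < μ (f.coeff i) - (((i : ℝ) * d : ℝ) : EReal))
    (g : Polynomial B) :
    polyPV μ d (f * g) ≤ polyPV μ d f + polyPV μ d g := by
  by_cases hg : g = 0
  · subst hg
    rw [mul_zero, polyPV_zero hμ, regular_val hμ d m f hmonic hdeg hreg,
      EReal.add_top_of_ne_bot (EReal.coe_ne_bot _)]
  obtain ⟨j, hj, hjmax⟩ := exists_max_attain hμ d hg
  obtain ⟨r, hr⟩ : ∃ r : ℝ, polyPV μ d g = (r : EReal) := by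
    lift polyPV μ d g to ℝ using ⟨polyPV_ne_top hμ d hg, polyPV_ne_bot hμ d g⟩ with r
    exact ⟨r, rfl⟩
  have hμgj : μ (g.coeff j) = ((r + (j : ℝ) * d : ℝ) : EReal) := by
    have h1 : μ (g.coeff j) - (((j : ℝ) * d : ℝ) : EReal) = (r : EReal) := by
      rw [← hr]; exact hj
    have := congrArg (· + (((j : ℝ) * d : ℝ) : EReal)) h1
    try simp only at this
    rw [sub_add_cancel_coe] at this
    rw [this, ← EReal.coe_add]
  have hcoeff : (f * g).coeff (m + j)
      = (∑ i ∈ Finset.range m, f.coeff i * g.coeff (m + j - i)) + g.coeff j := by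
    rw [Polynomial.coeff_mul, Finset.Nat.sum_antidiagonal_eq_sum_range_succ_mk]
    rw [← Finset.sum_subset (Finset.range_subset_range.mpr (by omega : m + 1 ≤ m + j + 1))
      (fun i _ hi => by
        have : m < i := by simpa using hi
        rw [Polynomial.coeff_eq_zero_of_natDegree_lt (hdeg ▸ this), zero_mul])]
    rw [Finset.sum_range_succ]
    congr 1
    rw [show f.coeff m = 1 by rw [← hdeg]; exact hmonic.coeff_natDegree, one_mul,
      Nat.add_sub_cancel_left]
  set s := ∑ i ∈ Finset.range m, f.coeff i * g.coeff (m + j - i) with hs_def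
  have hs : ((r + (j : ℝ) * d : ℝ) : EReal) < μ s := by
    refine pv_sum_lt hμ _ _ _ fun i hi => ?_
    have him : i < m := Finset.mem_range.mp hi
    set l := m + j - i with hl_def
    have hjl : j < l := by omega
    have hlr : (l : ℝ) = (m : ℝ) + (j : ℝ) - (i : ℝ) := by
      rw [hl_def]; push_cast [Nat.cast_sub (by omega : i ≤ m + j)]; ring
    have h1 : (((i : ℝ) * d - (m : ℝ) * d : ℝ) : EReal) < μ (f.coeff i) := by
      have := EReal.add_lt_add_right_coe (hreg i him) ((i : ℝ) * d)
      rw [sub_add_cancel_coe, ← EReal.coe_add] at this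
      convert this using 2
      ring
    have h2 : ((r + (l : ℝ) * d : ℝ) : EReal) < μ (g.coeff l) := by
      have hlt : (r : EReal) < μ (g.coeff l) - (((l : ℝ) * d : ℝ) : EReal) := by
        rw [← hr]; exact hjmax l hjl
      have := EReal.add_lt_add_right_coe hlt ((l : ℝ) * d)
      rw [sub_add_cancel_coe, ← EReal.coe_add] at this
      exact this
    have h3 := EReal.add_lt_add h1 h2
    rw [← EReal.coe_add] at h3
    have h4 : ((i : ℝ) * d - (m : ℝ) * d + (r + (l : ℝ) * d) : ℝ)
        = (r + (j : ℝ) * d : ℝ) := by rw [hlr]; ring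
    rw [h4] at h3
    exact h3.trans_le (hμ.1.add_le_mul _ _ (hμ.2.1 _) (hμ.2.1 _))
  have hmin : min (μ ((f * g).coeff (m + j))) (μ s) ≤ ((r + (j : ℝ) * d : ℝ) : EReal) := by
    have h1 := hμ.1.min_le_sub ((f * g).coeff (m + j)) s
    rw [show (f * g).coeff (m + j) - s = g.coeff j by rw [hcoeff]; ring] at h1
    rw [← hμgj]; exact h1
  have hle : μ ((f * g).coeff (m + j)) ≤ ((r + (j : ℝ) * d : ℝ) : EReal) := by
    rcases min_le_iff.mp hmin with h | h
    · exact h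
    · exact absurd (lt_of_lt_of_le hs h) (lt_irrefl _)
  have h1 : polyPV μ d (f * g) ≤ term μ d (f * g) (m + j) := iInf_le _ _
  have h2 : term μ d (f * g) (m + j) ≤ ((r - (m : ℝ) * d : ℝ) : EReal) := by
    rw [term]
    calc μ ((f * g).coeff (m + j)) - (((((m + j : ℕ)) : ℝ) * d : ℝ) : EReal)
        ≤ ((r + (j : ℝ) * d : ℝ) : EReal) - (((((m + j : ℕ)) : ℝ) * d : ℝ) : EReal) :=
          EReal.sub_le_sub hle le_rfl
      _ = ((r - (m : ℝ) * d : ℝ) : EReal) := by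
          rw [← EReal.coe_sub, EReal.coe_eq_coe_iff]
          push_cast
          ring
  rw [regular_val hμ d m f hmonic hdeg hreg, hr, ← EReal.coe_add]
  refine (h1.trans h2).trans (le_of_eq ?_)
  rw [EReal.coe_eq_coe_iff]
  ring

lemma compare_le (hμ : IsNegativePV μ) {d' d'' : ℝ} (hdd : d' ≤ d'') (y : Polynomial B) :
    polyPV μ d'' y ≤ polyPV μ d' y := by
  refine le_iInf fun i => (iInf_le _ i).trans ?_
  refine EReal.sub_le_sub le_rfl ?_
  rw [EReal.coe_le_coe_iff]
  have : (0:ℝ) ≤ (i:ℝ) := Nat.cast_nonneg i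
  nlinarith

lemma scale_le (hμ : IsNegativePV μ) {d' d'' : ℝ} (hd' : 0 < d') (hdd : d' ≤ d'')
    (y : Polynomial B) :
    polyPV μ d' y ≤ ((d' / d'' : ℝ) : EReal) * polyPV μ d'' y := by
  have hd'' : 0 < d'' := lt_of_lt_of_le hd' hdd
  by_cases hy : y = 0
  · subst hy
    rw [polyPV_zero hμ, polyPV_zero hμ, EReal.coe_mul_top_of_pos (div_pos hd' hd'')]
  obtain ⟨i, hi, _⟩ := exists_max_attain hμ d'' hy
  obtain ⟨r, hr⟩ : ∃ r : ℝ, polyPV μ d'' y = (r : EReal) := by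
    lift polyPV μ d'' y to ℝ using ⟨polyPV_ne_top hμ d'' hy, polyPV_ne_bot hμ d'' y⟩ with r
    exact ⟨r, rfl⟩
  have hμyi : μ (y.coeff i) = ((r + (i : ℝ) * d'' : ℝ) : EReal) := by
    have h1 : μ (y.coeff i) - (((i : ℝ) * d'' : ℝ) : EReal) = (r : EReal) := by
      rw [← hr]; exact hi
    have h2 := congrArg (· + (((i : ℝ) * d'' : ℝ) : EReal)) h1
    try simp only at h2
    rw [sub_add_cancel_coe] at h2
    rw [h2, ← EReal.coe_add]
  have hy0 : y.coeff i ≠ 0 := by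
    intro hc
    rw [hc, hμ.1.map_zero] at hμyi
    exact EReal.coe_ne_top _ hμyi.symm
  have hu : (r + (i : ℝ) * d'' : ℝ) ≤ 0 := by
    have := hμ.2.2 _ hy0
    rw [hμyi, show (0 : EReal) = ((0 : ℝ) : EReal) by simp, EReal.coe_le_coe_iff] at this
    exact this
  calc polyPV μ d' y ≤ μ (y.coeff i) - (((i : ℝ) * d' : ℝ) : EReal) := iInf_le _ i
    _ = ((r + (i : ℝ) * d'' - (i : ℝ) * d' : ℝ) : EReal) := by rw [hμyi, ← EReal.coe_sub]
    _ ≤ ((d' / d'' * r : ℝ) : EReal) := by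
        rw [EReal.coe_le_coe_iff, div_mul_eq_mul_div, le_div_iff₀ hd'']
        nlinarith [mul_nonneg (neg_nonneg.mpr hu) (sub_nonneg.mpr hdd)]
    _ = ((d' / d'' : ℝ) : EReal) * polyPV μ d'' y := by rw [hr, ← EReal.coe_mul]

lemma pow_mul_le (hμ : IsNegativePV μ) (d : ℝ) (m : ℕ) (h : Polynomial B)
    (hmonic : h.Monic) (hdeg : h.natDegree = m)
    (hreg : ∀ i < m, ((-((m : ℝ) * d) : ℝ) : EReal)
      < μ (h.coeff i) - (((i : ℝ) * d : ℝ) : EReal))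
    (hd : 0 < d) :
    ∀ (n : ℕ) (x : Polynomial B), polyPV μ d (h ^ n * x) ≤ polyPV μ d x := by
  intro n
  induction n with
  | zero => intro x; rw [pow_zero, one_mul]
  | succ n ih =>
    intro x
    have heq : h ^ (n + 1) * x = h * (h ^ n * x) := by ring
    rw [heq]
    have h1 : polyPV μ d (h * (h ^ n * x)) ≤ polyPV μ d h + polyPV μ d (h ^ n * x) :=
      key_le hμ d m h hmonic hdeg hreg _
    refine h1.trans ?_
    rw [regular_val hμ d m h hmonic hdeg hreg]
    have h2 : ((-((m : ℝ) * d) : ℝ) : EReal) ≤ (0 : EReal) := by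
      rw [show (0 : EReal) = ((0 : ℝ) : EReal) by simp, EReal.coe_le_coe_iff]
      have : (0:ℝ) ≤ (m:ℝ)*d := mul_nonneg (Nat.cast_nonneg m) hd.le
      linarith
    calc ((-((m : ℝ) * d) : ℝ) : EReal) + polyPV μ d (h ^ n * x)
        ≤ 0 + polyPV μ d (h ^ n * x) := add_le_add h2 le_rfl
      _ = polyPV μ d (h ^ n * x) := zero_add _
      _ ≤ polyPV μ d x := ih x

end S5aux


/-- If `f ∈ B[T]` is monic of degree `m` and regular with respect to `T`,
then `ν (f g) = ν f + ν g` for every `g`, where `ν = polyPV μ d`. Consequently every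
monic polynomial in `B[T]` is localizing (for every choice of `d > 0`). -/
theorem statement5 (B : Type*) [CommRing B]
    (μ : B → EReal) (hμ : IsNegativePV μ)
    (d : ℝ) (hd : 0 < d)
    (m : ℕ) (f : Polynomial B) (hmonic : f.Monic) (hdeg : f.natDegree = m)
    (hreg : ∀ i < m, ((-(( m : ℝ) * d) : ℝ) : EReal)
      < μ (f.coeff i) - (((i : ℝ) * d : ℝ) : EReal)) :
    (∀ g : Polynomial B, polyPV μ d (f * g) = polyPV μ d f + polyPV μ d g) ∧
    (∀ h : Polynomial B, h.Monic → ∀ d' : ℝ, 0 < d' → IsLocalizing (polyPV μ d') h) := by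
  constructor
  · intro g
    exact le_antisymm (S5aux.key_le hμ d m f hmonic hdeg hreg g) (S5aux.polyPV_mul_ge hμ d f g)
  · intro h hmono d' hd'
    set m₀ := h.natDegree with hm₀
    set R := ∑ i ∈ Finset.range m₀, max 0 (-(μ (h.coeff i))).toReal with hR_def
    have hR : 0 ≤ R := Finset.sum_nonneg fun i _ => le_max_left _ _
    set d'' := d' + R + 1 with hd''_def
    have hdd : d' ≤ d'' := by rw [hd''_def]; linarith
    have hd''pos : 0 < d'' := lt_of_lt_of_le hd' hdd
    have hreg'' : ∀ i < m₀, ((-((m₀ : ℝ) * d'') : ℝ) : EReal)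
        < μ (h.coeff i) - (((i : ℝ) * d'' : ℝ) : EReal) := by
      intro i him
      by_cases hc : h.coeff i = 0
      · rw [hc, hμ.1.map_zero, EReal.top_sub_coe]; exact EReal.coe_lt_top _
      · have hb := hμ.2.1 (h.coeff i)
        have hnp := hμ.2.2 _ hc
        have hnt : μ (h.coeff i) ≠ ⊤ := by
          intro ht; rw [ht] at hnp; simp at hnp
        have hkey : -(μ (h.coeff i)) ≤ (R : EReal) := by
          have hsingle : max 0 (-(μ (h.coeff i))).toReal ≤ R := by
            rw [hR_def]
            exact Finset.single_le_sum (f := fun j => max 0 (-(μ (h.coeff j))).toReal)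
              (fun j _ => le_max_left _ _) (Finset.mem_range.mpr him)
          have h2 : (-(μ (h.coeff i))).toReal ≤ R := (le_max_right _ _).trans hsingle
          rw [← EReal.coe_toReal (x := -(μ (h.coeff i)))
            (fun hh => hb (EReal.neg_eq_top_iff.mp hh))
            (fun hh => hnt (EReal.neg_eq_bot_iff.mp hh))]
          exact EReal.coe_le_coe_iff.mpr h2
        have hRlt : -(R : EReal) ≤ μ (h.coeff i) := EReal.neg_le.mp hkey
        have hlt : ((-((m₀ : ℝ) * d'') + (i : ℝ) * d'' : ℝ) : EReal) < μ (h.coeff i) := by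
          refine lt_of_lt_of_le ?_ hRlt
          rw [show -(R : EReal) = ((-R : ℝ) : EReal) by rw [EReal.coe_neg],
            EReal.coe_lt_coe_iff]
          have hcast : (i : ℝ) + 1 ≤ (m₀ : ℝ) := by exact_mod_cast him
          nlinarith
        have h4 := EReal.add_lt_add_right_coe hlt (-((i : ℝ) * d''))
        rw [← EReal.coe_add] at h4
        have h5 : ((-((m₀ : ℝ) * d'') + (i : ℝ) * d'') + (-((i : ℝ) * d'')) : ℝ)
            = -((m₀ : ℝ) * d'') := by ring
        rw [h5] at h4
        rw [sub_eq_add_neg, ← EReal.coe_neg]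
        exact h4
    refine ⟨d' / d'', 0, div_pos hd' hd''pos, le_refl 0, fun n x => ?_⟩
    have hC : (0 : EReal) ≤ ((d' / d'' : ℝ) : EReal) := by
      rw [show (0 : EReal) = ((0 : ℝ) : EReal) by simp, EReal.coe_le_coe_iff]
      exact (div_pos hd' hd''pos).le
    have step1 := S5aux.scale_le hμ hd' hdd (h ^ n * x)
    have step2 : polyPV μ d'' (h ^ n * x) ≤ polyPV μ d'' x :=
      S5aux.pow_mul_le hμ d'' m₀ h hmono hm₀.symm hreg'' hd''pos n x
    have step3 := S5aux.compare_le hμ hdd x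
    calc polyPV μ d' (h ^ n * x)
        ≤ ((d' / d'' : ℝ) : EReal) * polyPV μ d'' (h ^ n * x) := step1
      _ ≤ ((d' / d'' : ℝ) : EReal) * polyPV μ d'' x := mul_le_mul_of_nonneg_left step2 hC
      _ ≤ ((d' / d'' : ℝ) : EReal) * polyPV μ d' x := mul_le_mul_of_nonneg_left step3 hC
      _ ≤ ((d' / d'' : ℝ) : EReal) * polyPV μ d' x + (((n : ℝ) * 0 : ℝ) : EReal) := by
          simp
end
end

section
/- Let (A, ν) be a commutative ring with a negative pseudovaluation and let f, g ∈ A be non-zero divisors. Then the product fg is localizing with respect to ν if and only if both f and g are localizing with respect to ν. -/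
open scoped Classical

noncomputable section

section Aux6

variable {A : Type*} [CommRing A] {ν : A → EReal}

lemma pv_one_ne_zero (hν : IsNegativePV ν) : (1 : A) ≠ 0 := by
  intro h
  have h1 := hν.1.map_one
  rw [h, hν.1.map_zero] at h1
  simp at h1

lemma nzd_pow_mul {f : A} (hf : f ∈ nonZeroDivisors A) (n : ℕ) {x : A} (hx : x ≠ 0) :
    f ^ n * x ≠ 0 := by
  intro h
  exact hx (mem_nonZeroDivisors_iff_right.mp (pow_mem hf n) x (by rw [mul_comm]; exact h))

lemma pvReal (hν : IsNegativePV ν) {a : A} (ha : a ≠ 0) :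
    ∃ r : ℝ, ν a = (r : EReal) ∧ r ≤ 0 := by
  have h1 : ν a ≠ ⊥ := hν.2.1 a
  have h2 : ν a ≤ 0 := hν.2.2 a ha
  have h3 : ν a ≠ ⊤ := ne_top_of_le_ne_top (by simp) h2
  refine ⟨(ν a).toReal, (EReal.coe_toReal h3 h1).symm, ?_⟩
  have := EReal.toReal_le_toReal h2 h1 (by simp)
  simpa using this

lemma pvPowLB (hν : IsNegativePV ν) {g : A} (hg : g ∈ nonZeroDivisors A)
    {rg : ℝ} (hrg : ν g = (rg : EReal)) (n : ℕ) :
    ∃ s : ℝ, ν (g ^ n) = (s : EReal) ∧ (n : ℝ) * rg ≤ s := by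
  induction n with
  | zero => exact ⟨0, by simpa using hν.1.map_one, by simp⟩
  | succ n ih =>
    obtain ⟨s, hs, hns⟩ := ih
    have hgn : g ^ (n + 1) ≠ 0 := by
      have := nzd_pow_mul hg (n + 1) (x := 1) (pv_one_ne_zero hν)
      simpa using this
    obtain ⟨t, ht, _⟩ := pvReal hν hgn
    refine ⟨t, ht, ?_⟩
    have hmul : ν (g ^ n) + ν g ≤ ν (g ^ n * g) :=
      hν.1.add_le_mul _ _ (hν.2.1 _) (hν.2.1 _)
    rw [← pow_succ] at hmul
    rw [hs, hrg, ht] at hmul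
    have h2 : s + rg ≤ t := by exact_mod_cast hmul
    push_cast
    nlinarith

end Aux6

/-- For non-zero divisors `f, g`, the product `f g` is localizing iff
both `f` and `g` are localizing. -/
theorem statement6 (A : Type*) [CommRing A]
    (ν : A → EReal) (hν : IsNegativePV ν)
    (f g : A) (hf : f ∈ nonZeroDivisors A) (hg : g ∈ nonZeroDivisors A) :
    IsLocalizing ν (f * g) ↔ (IsLocalizing ν f ∧ IsLocalizing ν g) := by
  constructor
  · rintro ⟨C, D, hC, hD, h⟩
    have key : ∀ u v : A, u ∈ nonZeroDivisors A → v ∈ nonZeroDivisors A →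
        (∀ (n : ℕ) (x : A), ν ((u * v) ^ n * x) ≤ (C : EReal) * ν x + (((n : ℝ) * D : ℝ) : EReal)) →
        IsLocalizing ν u := by
      intro u v hu hv hk
      have hv0 : v ≠ 0 := by
        have := nzd_pow_mul hv 1 (x := 1) (pv_one_ne_zero hν); simpa using this
      obtain ⟨rv, hrv, hrv0⟩ := pvReal hν hv0
      refine ⟨C, D - rv, hC, by linarith, ?_⟩
      intro n x
      by_cases hx : x = 0
      · subst hx
        rw [mul_zero, hν.1.map_zero, EReal.coe_mul_top_of_pos hC]
        exact le_of_eq (EReal.top_add_of_ne_bot (EReal.coe_ne_bot _)).symm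
      · obtain ⟨a, ha, _⟩ := pvReal hν hx
        have hux : u ^ n * x ≠ 0 := nzd_pow_mul hu n hx
        obtain ⟨b, hb, _⟩ := pvReal hν hux
        obtain ⟨s, hs, hns⟩ := pvPowLB hν hv hrv n
        have hmul : ν (v ^ n) + ν (u ^ n * x) ≤ ν (v ^ n * (u ^ n * x)) :=
          hν.1.add_le_mul _ _ (hν.2.1 _) (hν.2.1 _)
        have hrw : v ^ n * (u ^ n * x) = (u * v) ^ n * x := by ring
        rw [hrw] at hmul
        have hk' := hk n x
        rw [ha] at hk'
        have htot : ν (v ^ n) + ν (u ^ n * x) ≤ (C : EReal) * (a : EReal) + (((n : ℝ) * D : ℝ) : EReal) :=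
          le_trans hmul hk'
        rw [hs, hb] at htot
        have hreal : s + b ≤ C * a + n * D := by exact_mod_cast htot
        rw [ha, hb]
        have : b ≤ C * a + n * (D - rv) := by nlinarith
        exact_mod_cast this
    exact ⟨key f g hf hg h, key g f hg hf (by intro n x; rw [mul_comm g f]; exact h n x)⟩
  · rintro ⟨⟨Cf, Df, hCf, hDf, hf'⟩, ⟨Cg, Dg, hCg, hDg, hg'⟩⟩
    refine ⟨Cf * Cg, Cf * Dg + Df, by positivity, by positivity, ?_⟩
    intro n x
    by_cases hx : x = 0
    · subst hx
      rw [mul_zero, hν.1.map_zero, EReal.coe_mul_top_of_pos (by positivity)]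
      exact le_of_eq (EReal.top_add_of_ne_bot (EReal.coe_ne_bot _)).symm
    · obtain ⟨a, ha, _⟩ := pvReal hν hx
      have hgx : g ^ n * x ≠ 0 := nzd_pow_mul hg n hx
      obtain ⟨b, hb, _⟩ := pvReal hν hgx
      have hfgx : f ^ n * (g ^ n * x) ≠ 0 := nzd_pow_mul hf n hgx
      obtain ⟨c, hc, _⟩ := pvReal hν hfgx
      have h1 := hf' n (g ^ n * x)
      rw [hb, hc] at h1
      have h1r : c ≤ Cf * b + n * Df := by exact_mod_cast h1
      have h2 := hg' n x
      rw [ha, hb] at h2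
      have h2r : b ≤ Cg * a + n * Dg := by exact_mod_cast h2
      have hrw : (f * g) ^ n * x = f ^ n * (g ^ n * x) := by ring
      rw [hrw, hc, ha]
      have : c ≤ Cf * Cg * a + n * (Cf * Dg + Df) := by nlinarith
      exact_mod_cast this
end
end

section
/- Let (A, ν) be an integral domain with a negative pseudovaluation such that every nonzero element of A is localizing with respect to ν. Let A → B be a finite ring homomorphism such that B is a free A-module of finite rank, and let μ be an admissible pseudovaluation on the finitely generated A-algebra B. Then every non-zero divisor of B is localizing with respect to μ. -/
open scoped Classical

noncomputable section

/-! ### Auxiliary lemmas -/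

section AuxHelpers

lemma ereal_sub_coe (x : EReal) (r : ℝ) : x - (r : EReal) = x + ((-r : ℝ) : EReal) := by
  rw [EReal.coe_neg]; rfl

lemma ereal_add_coe_neg (x : EReal) (r : ℝ) : x + (r : EReal) + ((-r : ℝ) : EReal) = x := by
  rw [add_assoc, ← EReal.coe_add]; simp

lemma ereal_exists_lb {κ : Type*} (s : Finset κ) (v : κ → EReal) (h : ∀ k ∈ s, v k ≠ ⊥) :
    ∃ r : ℝ, r ≤ 0 ∧ ∀ k ∈ s, (r : EReal) ≤ v k := by
  classical
  induction s using Finset.induction with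
  | empty => exact ⟨0, le_refl 0, by simp⟩
  | @insert a s' hx ih =>
    obtain ⟨r, hr0, hr⟩ := ih (fun k hk => h k (Finset.mem_insert_of_mem hk))
    have hva : v a ≠ ⊥ := h a (Finset.mem_insert_self a s')
    obtain ⟨q, hq0, hq⟩ : ∃ q : ℝ, q ≤ 0 ∧ (q : EReal) ≤ v a := by
      by_cases htop : v a = ⊤
      · exact ⟨0, le_refl 0, by simp [htop]⟩
      · refine ⟨min (v a).toReal 0, min_le_right _ _, ?_⟩
        calc ((min (v a).toReal 0 : ℝ) : EReal) ≤ ((v a).toReal : EReal) := by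
              exact_mod_cast min_le_left _ _
          _ = v a := EReal.coe_toReal htop hva
    refine ⟨min r q, le_trans (min_le_right _ _) hq0, ?_⟩
    intro k hk
    rcases Finset.mem_insert.mp hk with rfl | hk'
    · exact le_trans (by exact_mod_cast min_le_right r q) hq
    · exact le_trans (by exact_mod_cast min_le_left r q) (hr k hk')

lemma ereal_iInf_attained {ι : Type*} [Finite ι] [Nonempty ι] (v : ι → EReal) :
    ∃ i, (⨅ j, v j) = v i := by
  obtain ⟨i, hi⟩ := Finite.exists_min v
  exact ⟨i, le_antisymm (iInf_le _ i) (le_iInf hi)⟩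

lemma ereal_real_of_bounds {z : EReal} (h1 : z ≤ 0) (h2 : ∃ r : ℝ, (r : EReal) ≤ z) :
    ∃ s : ℝ, s ≤ 0 ∧ z = ((s : ℝ) : EReal) := by
  obtain ⟨r, hr⟩ := h2
  have hnb : z ≠ ⊥ := fun h => by rw [h] at hr; exact absurd hr (by simp)
  have hnt : z ≠ ⊤ := by
    intro h
    rw [h] at h1
    simp at h1
  refine ⟨z.toReal, ?_, (EReal.coe_toReal hnt hnb).symm⟩
  have := EReal.coe_toReal hnt hnb
  rw [← this] at h1
  exact_mod_cast h1

lemma le_q_sum {M ι : Type*} [AddCommMonoid M] {q : M → EReal} (h0 : q 0 = ⊤)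
    (hadd : ∀ u v, min (q u) (q v) ≤ q (u + v)) (s : Finset ι) (g : ι → M) (z : EReal)
    (h : ∀ i ∈ s, z ≤ q (g i)) : z ≤ q (∑ i ∈ s, g i) := by
  classical
  induction s using Finset.induction with
  | empty => simp [h0]
  | @insert a s' hx ih =>
    rw [Finset.sum_insert hx]
    refine le_trans (le_min (h a (Finset.mem_insert_self a s'))
      (ih (fun i hi => h i (Finset.mem_insert_of_mem hi)))) (hadd _ _)

end AuxHelpers

section NuLemmas

variable {A : Type*} [CommRing A] {ν : A → EReal}

lemma nu_neg_eq (hν : IsNegativePV ν) (a : A) : ν (-a) = ν a := by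
  have h1 : ∀ x : A, ν x ≤ ν (-x) := by
    intro x
    have := hν.1.min_le_sub 0 x
    simpa [hν.1.map_zero, zero_sub] using this
  exact le_antisymm (by simpa using h1 (-a)) (h1 a)

lemma nu_add (hν : IsNegativePV ν) (a b : A) : min (ν a) (ν b) ≤ ν (a + b) := by
  have := hν.1.min_le_sub a (-b)
  simpa [nu_neg_eq hν, sub_neg_eq_add] using this

lemma nu_mul (hν : IsNegativePV ν) (a b : A) : ν a + ν b ≤ ν (a * b) :=
  hν.1.add_le_mul a b (hν.2.1 a) (hν.2.1 b)

lemma nu_sum {ι : Type*} (hν : IsNegativePV ν) (s : Finset ι) (g : ι → A) (z : EReal)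
    (h : ∀ i ∈ s, z ≤ ν (g i)) : z ≤ ν (∑ i ∈ s, g i) :=
  le_q_sum hν.1.map_zero (nu_add hν) s g z h

end NuLemmas

section WLemmas

variable {A : Type*} [CommRing A] {ν : A → EReal} {m : ℕ} {d : Fin m → ℝ}

/-- weight of an exponent -/
def wtOf (d : Fin m → ℝ) (k : Fin m →₀ ℕ) : ℝ := ∑ i, (k i : ℝ) * d i

lemma wt_nonneg (hd : ∀ i, 0 < d i) (k : Fin m →₀ ℕ) : 0 ≤ wtOf d k :=
  Finset.sum_nonneg fun i _ => mul_nonneg (by positivity) (hd i).le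

lemma wt_add (u v : Fin m →₀ ℕ) : wtOf d (u + v) = wtOf d u + wtOf d v := by
  rw [wtOf, wtOf, wtOf, ← Finset.sum_add_distrib]
  refine Finset.sum_congr rfl fun i _ => ?_
  rw [Finsupp.add_apply]
  push_cast
  ring

lemma w_le (f : MvPolynomial (Fin m) A) (k : Fin m →₀ ℕ) :
    weightedDegPV ν d f ≤ ν (MvPolynomial.coeff k f) - ((wtOf d k : ℝ) : EReal) :=
  iInf_le _ k

lemma le_w {f : MvPolynomial (Fin m) A} {z : EReal}
    (h : ∀ k : Fin m →₀ ℕ, z ≤ ν (MvPolynomial.coeff k f) - ((wtOf d k : ℝ) : EReal)) :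
    z ≤ weightedDegPV ν d f := le_iInf h

lemma nu_ge_w (f : MvPolynomial (Fin m) A) (k : Fin m →₀ ℕ) :
    weightedDegPV ν d f + ((wtOf d k : ℝ) : EReal) ≤ ν (MvPolynomial.coeff k f) := by
  have h1 := w_le (ν := ν) (d := d) f k
  rw [ereal_sub_coe] at h1
  calc weightedDegPV ν d f + ((wtOf d k : ℝ) : EReal)
      ≤ (ν (MvPolynomial.coeff k f) + ((-(wtOf d k) : ℝ) : EReal)) + ((wtOf d k : ℝ) : EReal) :=
        add_le_add_left h1 _
    _ = ν (MvPolynomial.coeff k f) := by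
        rw [add_assoc, ← EReal.coe_add]; simp

lemma w_zero (hν : IsNegativePV ν) : weightedDegPV ν d (0 : MvPolynomial (Fin m) A) = ⊤ := by
  rw [weightedDegPV]
  simp only [MvPolynomial.coeff_zero, hν.1.map_zero]
  simp [EReal.top_sub_coe]

lemma w_nonpos (hν : IsNegativePV ν) (hd : ∀ i, 0 < d i) {f : MvPolynomial (Fin m) A}
    (hf : f ≠ 0) : weightedDegPV ν d f ≤ 0 := by
  obtain ⟨k, hk⟩ := MvPolynomial.ne_zero_iff.mp hf
  refine le_trans (w_le f k) ?_
  rw [ereal_sub_coe]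
  calc ν (MvPolynomial.coeff k f) + ((-(wtOf d k) : ℝ) : EReal) ≤ 0 + 0 := by
        refine add_le_add (hν.2.2 _ hk) ?_
        exact_mod_cast neg_nonpos.mpr (wt_nonneg hd k)
    _ = 0 := by simp

lemma w_lb (hν : IsNegativePV ν) (f : MvPolynomial (Fin m) A) :
    ∃ r : ℝ, r ≤ 0 ∧ ((r : ℝ) : EReal) ≤ weightedDegPV ν d f := by
  obtain ⟨r, hr0, hr⟩ := ereal_exists_lb f.support
    (fun k => ν (MvPolynomial.coeff k f) - ((wtOf d k : ℝ) : EReal))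
    (by
      intro k _
      try dsimp only
      rw [ereal_sub_coe]
      intro hbot
      rcases EReal.add_eq_bot_iff.mp hbot with h | h
      · exact hν.2.1 _ h
      · exact EReal.coe_ne_bot _ h)
  refine ⟨r, hr0, le_w fun k => ?_⟩
  by_cases hk : k ∈ f.support
  · exact hr k hk
  · have hc : MvPolynomial.coeff k f = 0 := by
      simpa [MvPolynomial.mem_support_iff] using hk
    rw [hc, hν.1.map_zero, EReal.top_sub_coe]
    exact le_top

lemma w_real (hν : IsNegativePV ν) (hd : ∀ i, 0 < d i) {f : MvPolynomial (Fin m) A}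
    (hf : f ≠ 0) : ∃ s : ℝ, s ≤ 0 ∧ weightedDegPV ν d f = ((s : ℝ) : EReal) := by
  obtain ⟨r, _, hr⟩ := w_lb (d := d) hν f
  exact ereal_real_of_bounds (w_nonpos hν hd hf) ⟨r, hr⟩

lemma w_add (hν : IsNegativePV ν) (f g : MvPolynomial (Fin m) A) :
    min (weightedDegPV ν d f) (weightedDegPV ν d g) ≤ weightedDegPV ν d (f + g) := by
  refine le_w fun k => ?_
  rw [MvPolynomial.coeff_add, ereal_sub_coe]
  have hmin := nu_add hν (MvPolynomial.coeff k f) (MvPolynomial.coeff k g)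
  rcases le_total (ν (MvPolynomial.coeff k f)) (ν (MvPolynomial.coeff k g)) with h | h
  · have h2 : ν (MvPolynomial.coeff k f) ≤ ν (MvPolynomial.coeff k f + MvPolynomial.coeff k g) := by
      rw [← min_eq_left h]; exact hmin
    calc min (weightedDegPV ν d f) (weightedDegPV ν d g) ≤ weightedDegPV ν d f :=
          min_le_left _ _
      _ ≤ ν (MvPolynomial.coeff k f) + ((-(wtOf d k) : ℝ) : EReal) := by
          rw [← ereal_sub_coe]; exact w_le f k
      _ ≤ _ := add_le_add_left h2 _
  · have h2 : ν (MvPolynomial.coeff k g) ≤ ν (MvPolynomial.coeff k f + MvPolynomial.coeff k g) := by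
      rw [← min_eq_right h]; exact hmin
    calc min (weightedDegPV ν d f) (weightedDegPV ν d g) ≤ weightedDegPV ν d g :=
          min_le_right _ _
      _ ≤ ν (MvPolynomial.coeff k g) + ((-(wtOf d k) : ℝ) : EReal) := by
          rw [← ereal_sub_coe]; exact w_le g k
      _ ≤ _ := add_le_add_left h2 _

lemma w_mul (hν : IsNegativePV ν) (f g : MvPolynomial (Fin m) A) :
    weightedDegPV ν d f + weightedDegPV ν d g ≤ weightedDegPV ν d (f * g) := by
  classical
  refine le_w fun k => ?_
  rw [ereal_sub_coe, MvPolynomial.coeff_mul]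
  have key : weightedDegPV ν d f + weightedDegPV ν d g + ((wtOf d k : ℝ) : EReal) ≤
      ν (∑ p ∈ Finset.HasAntidiagonal.antidiagonal k,
        MvPolynomial.coeff p.1 f * MvPolynomial.coeff p.2 g) := by
    refine nu_sum hν _ _ _ fun p hp => ?_
    have hp' : p.1 + p.2 = k := Finset.HasAntidiagonal.mem_antidiagonal.mp hp
    have heq : weightedDegPV ν d f + weightedDegPV ν d g + ((wtOf d k : ℝ) : EReal) =
        (weightedDegPV ν d f + ((wtOf d p.1 : ℝ) : EReal)) +
        (weightedDegPV ν d g + ((wtOf d p.2 : ℝ) : EReal)) := by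
      rw [← hp', wt_add, EReal.coe_add]
      abel
    rw [heq]
    exact le_trans (add_le_add (nu_ge_w f p.1) (nu_ge_w g p.2)) (nu_mul hν _ _)
  calc weightedDegPV ν d f + weightedDegPV ν d g
      = weightedDegPV ν d f + weightedDegPV ν d g + ((wtOf d k : ℝ) : EReal) +
        ((-(wtOf d k) : ℝ) : EReal) := (ereal_add_coe_neg _ _).symm
    _ ≤ _ := add_le_add_left key _

lemma w_sum {ι : Type*} (hν : IsNegativePV ν) (s : Finset ι) (g : ι → MvPolynomial (Fin m) A)
    (z : EReal) (h : ∀ i ∈ s, z ≤ weightedDegPV ν d (g i)) :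
    z ≤ weightedDegPV ν d (∑ i ∈ s, g i) :=
  le_q_sum (w_zero hν) (w_add hν) s g z h

lemma w_C_ge (hν : IsNegativePV ν) (a : A) :
    ν a ≤ weightedDegPV ν d (MvPolynomial.C a : MvPolynomial (Fin m) A) := by
  classical
  refine le_w fun k => ?_
  rw [MvPolynomial.coeff_C]
  by_cases hk : (0 : Fin m →₀ ℕ) = k
  · rw [if_pos hk]
    have hwt : wtOf d k = 0 := by
      rw [← hk, wtOf]
      simp
    rw [hwt]
    simp
  · rw [if_neg hk, hν.1.map_zero, EReal.top_sub_coe]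
    exact le_top

end WLemmas

section CoordPV

variable {A B ι : Type*} [CommRing A] [CommRing B] [Algebra A B] [Fintype ι]

/-- coordinate pseudovaluation w.r.t. a basis -/
def coordPV (bs : Module.Basis ι A B) (ν : A → EReal) (x : B) : EReal := ⨅ i, ν (bs.repr x i)

set_option linter.unusedSectionVars false

variable (bs : Module.Basis ι A B) {ν : A → EReal}

lemma coordPV_le (x : B) (i : ι) : coordPV bs ν x ≤ ν (bs.repr x i) := iInf_le _ i

lemma le_coordPV {x : B} {z : EReal} (h : ∀ i, z ≤ ν (bs.repr x i)) : z ≤ coordPV bs ν x :=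
  le_iInf h

lemma coordPV_lb (hν : IsNegativePV ν) (x : B) :
    ∃ r : ℝ, r ≤ 0 ∧ (r : EReal) ≤ coordPV bs ν x := by
  obtain ⟨r, h0, h⟩ := ereal_exists_lb Finset.univ (fun i => ν (bs.repr x i))
    (fun i _ => hν.2.1 _)
  exact ⟨r, h0, le_coordPV bs fun i => h i (Finset.mem_univ i)⟩

lemma coordPV_nonpos (hν : IsNegativePV ν) {x : B} (hx : x ≠ 0) : coordPV bs ν x ≤ 0 := by
  have : ∃ i, bs.repr x i ≠ 0 := by
    by_contra hc
    push_neg at hc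
    apply hx
    have : bs.repr x = 0 := Finsupp.ext fun i => hc i
    exact (LinearEquiv.map_eq_zero_iff _).mp this
  obtain ⟨i, hi⟩ := this
  exact le_trans (coordPV_le bs x i) (hν.2.2 _ hi)

lemma coordPV_real (hν : IsNegativePV ν) {x : B} (hx : x ≠ 0) :
    ∃ s : ℝ, s ≤ 0 ∧ coordPV bs ν x = ((s : ℝ) : EReal) := by
  obtain ⟨r, _, hr⟩ := coordPV_lb bs hν x
  exact ereal_real_of_bounds (coordPV_nonpos bs hν hx) ⟨r, hr⟩

lemma coordPV_ne_bot (hν : IsNegativePV ν) (x : B) : coordPV bs ν x ≠ ⊥ := by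
  obtain ⟨r, _, hr⟩ := coordPV_lb bs hν x
  intro h
  rw [h] at hr
  exact EReal.coe_ne_bot r (le_bot_iff.mp hr)

lemma coordPV_mul (hν : IsNegativePV ν) :
    ∃ E : ℝ, 0 ≤ E ∧ (((-E : ℝ) : EReal) ≤ coordPV bs ν 1) ∧
      ∀ u v : B, coordPV bs ν u + coordPV bs ν v + ((-E : ℝ) : EReal) ≤ coordPV bs ν (u * v) := by
  classical
  obtain ⟨r, hr0, hr⟩ := ereal_exists_lb (Finset.univ : Finset (ι × ι × ι))
    (fun p => ν (bs.repr (bs p.1 * bs p.2.1) p.2.2)) (fun p _ => hν.2.1 _)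
  obtain ⟨r1, hr10, hr1⟩ := coordPV_lb bs hν 1
  refine ⟨max (-r) (-r1), le_max_of_le_left (by linarith), ?_, ?_⟩
  · have h1 : (-(max (-r) (-r1)) : ℝ) ≤ r1 := by
      have := le_max_right (-r) (-r1)
      linarith
    exact le_trans (EReal.coe_le_coe_iff.mpr h1) hr1
  · intro u v
    refine le_coordPV bs fun l => ?_
    set L : B →ₗ[A] A := (Finsupp.lapply l).comp bs.repr.toLinearMap with hLdef
    have hLy : ∀ y : B, bs.repr y l = L y := fun y => rfl
    have huv : u * v = ∑ i : ι, ∑ j : ι, (bs.repr u i * bs.repr v j) • (bs i * bs j) := by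
      conv_lhs => rw [← Module.Basis.sum_repr bs u, ← Module.Basis.sum_repr bs v]
      rw [Finset.sum_mul]
      refine Finset.sum_congr rfl fun i _ => ?_
      rw [Finset.mul_sum]
      refine Finset.sum_congr rfl fun j _ => ?_
      rw [smul_mul_smul_comm]
    rw [hLy, huv, map_sum]
    refine nu_sum hν _ _ _ fun i _ => ?_
    rw [map_sum]
    refine nu_sum hν _ _ _ fun j _ => ?_
    rw [LinearMap.map_smul, smul_eq_mul]
    have hEr : ((-(max (-r) (-r1)) : ℝ) : EReal) ≤ ν (L (bs i * bs j)) := by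
      have h2 : (-(max (-r) (-r1)) : ℝ) ≤ r := by
        have := le_max_left (-r) (-r1)
        linarith
      refine le_trans (EReal.coe_le_coe_iff.mpr h2) ?_
      have := hr (i, j, l) (Finset.mem_univ _)
      exact this
    calc coordPV bs ν u + coordPV bs ν v + ((-(max (-r) (-r1)) : ℝ) : EReal)
        ≤ ν (bs.repr u i) + ν (bs.repr v j) + ν (L (bs i * bs j)) :=
          add_le_add (add_le_add (coordPV_le bs u i) (coordPV_le bs v j)) hEr
      _ ≤ ν (bs.repr u i * bs.repr v j) + ν (L (bs i * bs j)) :=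
          add_le_add_left (nu_mul hν _ _) _
      _ ≤ ν (bs.repr u i * bs.repr v j * L (bs i * bs j)) := nu_mul hν _ _

lemma coordPV_pow (hν : IsNegativePV ν) {E T : ℝ} {y : B}
    (h1 : ((-E : ℝ) : EReal) ≤ coordPV bs ν 1)
    (hmul : ∀ u v : B, coordPV bs ν u + coordPV bs ν v + ((-E : ℝ) : EReal) ≤ coordPV bs ν (u * v))
    (hy : ((-T : ℝ) : EReal) ≤ coordPV bs ν y) (n : ℕ) :
    ((-((n : ℝ) * T + ((n : ℝ) + 1) * E) : ℝ) : EReal) ≤ coordPV bs ν (y ^ n) := by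
  induction n with
  | zero =>
    rw [pow_zero]
    refine le_trans (le_of_eq ?_) h1
    norm_num
  | succ n ih =>
    rw [pow_succ']
    have heq : ((-(((n : ℝ) + 1) * T + (((n : ℝ) + 1) + 1) * E) : ℝ) : EReal) =
        ((-T : ℝ) : EReal) + ((-((n : ℝ) * T + ((n : ℝ) + 1) * E) : ℝ) : EReal) +
          ((-E : ℝ) : EReal) := by
      rw [← EReal.coe_add, ← EReal.coe_add]
      congr 1
      ring
    rw [show ((n + 1 : ℕ) : ℝ) = (n : ℝ) + 1 by push_cast; ring, heq]
    exact le_trans (add_le_add (add_le_add hy ih) le_rfl) (hmul y (y ^ n))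

lemma coordPV_prod (hν : IsNegativePV ν) {E : ℝ}
    (h1 : ((-E : ℝ) : EReal) ≤ coordPV bs ν 1)
    (hmul : ∀ u v : B, coordPV bs ν u + coordPV bs ν v + ((-E : ℝ) : EReal) ≤ coordPV bs ν (u * v))
    {J : Type*} (s : Finset J) (z : J → B) (q : J → ℝ)
    (h : ∀ j ∈ s, ((q j : ℝ) : EReal) ≤ coordPV bs ν (z j)) :
    (((∑ j ∈ s, q j) - ((s.card : ℝ) + 1) * E : ℝ) : EReal) ≤ coordPV bs ν (∏ j ∈ s, z j) := by
  classical
  induction s using Finset.induction with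
  | empty =>
    simp only [Finset.sum_empty, Finset.card_empty, Finset.prod_empty]
    refine le_trans (le_of_eq ?_) h1
    norm_num
  | @insert a s' hx ih =>
    rw [Finset.prod_insert hx]
    have hstep := hmul (z a) (∏ j ∈ s', z j)
    have hprev := ih (fun j hj => h j (Finset.mem_insert_of_mem hj))
    have heq : (((∑ j ∈ insert a s', q j) -
        (((insert a s').card : ℝ) + 1) * E : ℝ) : EReal) =
        ((q a : ℝ) : EReal) +
          (((∑ j ∈ s', q j) - ((s'.card : ℝ) + 1) * E : ℝ) : EReal) + ((-E : ℝ) : EReal) := by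
      rw [← EReal.coe_add, ← EReal.coe_add]
      congr 1
      rw [Finset.sum_insert hx, Finset.card_insert_of_notMem hx]
      push_cast
      ring
    rw [heq]
    refine le_trans (add_le_add (add_le_add (h a (Finset.mem_insert_self a s')) hprev) le_rfl)
      hstep

end CoordPV

section IntegralAnn

variable {A B : Type*} [CommRing A] [CommRing B] [Algebra A B]

lemma exists_ann_aux {b : B} (hb : b ∈ nonZeroDivisors B) :
    ∀ N : ℕ, ∀ p : Polynomial A, p.natDegree ≤ N → p ≠ 0 → Polynomial.aeval b p = 0 →
      ∃ a : A, a ≠ 0 ∧ ∃ c : B, algebraMap A B a = b * c := by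
  intro N
  induction N with
  | zero =>
    intro p hdeg hp hev
    have hpC : p = Polynomial.C (p.coeff 0) := Polynomial.eq_C_of_natDegree_le_zero hdeg
    refine ⟨p.coeff 0, fun h => hp (by rw [hpC, h, map_zero]), 0, ?_⟩
    rw [mul_zero]
    rw [hpC] at hev
    simpa using hev
  | succ N ih =>
    intro p hdeg hp hev
    have hsplit : Polynomial.aeval b p.divX * b + algebraMap A B (p.coeff 0) = 0 := by
      have h := hev
      rw [← Polynomial.divX_mul_X_add p, map_add, map_mul, Polynomial.aeval_X,
        Polynomial.aeval_C] at h
      exact h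
    by_cases h0 : p.coeff 0 = 0
    · have hdx : p.divX ≠ 0 := by
        intro h
        apply hp
        rw [← Polynomial.divX_mul_X_add p, h, zero_mul, zero_add, h0, map_zero]
      have hevx : Polynomial.aeval b p.divX * b = 0 := by
        rw [h0, map_zero, add_zero] at hsplit
        exact hsplit
      have hz : Polynomial.aeval b p.divX = 0 := (mem_nonZeroDivisors_iff_right.mp hb) _ hevx
      refine ih p.divX ?_ hdx hz
      have := Polynomial.natDegree_divX_eq_natDegree_tsub_one (p := p)
      omega
    · refine ⟨p.coeff 0, h0, -(Polynomial.aeval b p.divX), ?_⟩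
      have := eq_neg_of_add_eq_zero_right hsplit
      rw [this]
      ring

lemma exists_ann [Nontrivial A] [Module.Finite A B] {b : B} (hb : b ∈ nonZeroDivisors B) :
    ∃ a : A, a ≠ 0 ∧ ∃ c : B, algebraMap A B a = b * c := by
  have hint : IsIntegral A b := Algebra.IsIntegral.isIntegral (R := A) b
  obtain ⟨p, hmonic, hev⟩ := hint
  exact exists_ann_aux hb p.natDegree p le_rfl hmonic.ne_zero
    (by rw [Polynomial.aeval_def]; exact hev)

end IntegralAnn
set_option maxHeartbeats 1000000 in
/-- If `(A, ν)` is an integral domain with a negative pseudovaluation in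
which every nonzero element is localizing, and `B` is a finite free `A`-algebra with an
admissible pseudovaluation `μ`, then every non-zero divisor of `B` is localizing. -/
theorem statement7 (A B : Type*) [CommRing A] [IsDomain A] [CommRing B]
    [Algebra A B] [Module.Finite A B] [Module.Free A B]
    (ν : A → EReal) (hν : IsNegativePV ν)
    (hloc : ∀ a : A, a ≠ 0 → IsLocalizing ν a)
    (μ : B → EReal) (hμ : IsAdmissiblePV ν μ) :
    ∀ b ∈ nonZeroDivisors B, IsLocalizing μ b := by
  classical
  obtain ⟨m, π, d, hπ, hd, hμdef⟩ := hμ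
  intro b hb
  have mu_ge : ∀ (f : MvPolynomial (Fin m) A) (y : B), π f = y → weightedDegPV ν d f ≤ μ y := by
    intro f y hf
    rw [hμdef]
    exact le_iSup₂ (f := fun f (_ : π f = y) => weightedDegPV ν d f) f hf
  have mu_le : ∀ (y : B) (z : EReal),
      (∀ f : MvPolynomial (Fin m) A, π f = y → weightedDegPV ν d f ≤ z) → μ y ≤ z := by
    intro y z h
    rw [hμdef]
    exact iSup₂_le h
  have mu_zero : μ (0 : B) = ⊤ := by
    have h := mu_ge 0 0 (map_zero π)
    rw [w_zero hν] at h
    exact top_le_iff.mp h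
  by_cases hBtriv : Subsingleton B
  · refine ⟨1, 0, one_pos, le_refl 0, ?_⟩
    intro n x
    haveI := hBtriv
    have hx : b ^ n * x = x := Subsingleton.elim _ _
    rw [hx]
    simp only [mul_zero, EReal.coe_zero, add_zero, EReal.coe_one, one_mul]
    exact le_rfl
  · haveI : Nontrivial B := not_subsingleton_iff_nontrivial.mp hBtriv
    set ι := Module.Free.ChooseBasisIndex A B with hι
    set bs : Module.Basis ι A B := Module.Free.chooseBasis A B with hbs
    haveI : Nonempty ι := bs.index_nonempty
    -- basic facts about μ
    have mu_nonpos : ∀ y : B, y ≠ 0 → μ y ≤ 0 := by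
      intro y hy
      refine mu_le y 0 fun f hf => ?_
      have hf0 : f ≠ 0 := by
        rintro rfl
        rw [map_zero] at hf
        exact hy hf.symm
      exact w_nonpos hν hd hf0
    have mu_real : ∀ y : B, y ≠ 0 → ∃ s : ℝ, s ≤ 0 ∧ μ y = ((s : ℝ) : EReal) := by
      intro y hy
      obtain ⟨f0, hf0⟩ := hπ y
      obtain ⟨r, _, hr⟩ := w_lb (d := d) hν f0
      exact ereal_real_of_bounds (mu_nonpos y hy) ⟨r, le_trans hr (mu_ge f0 y hf0)⟩
    -- multiplication defect constant E
    obtain ⟨E, hE0, hE1, hEmul⟩ := coordPV_mul bs hν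
    -- generator bound T
    set t : Fin m → B := fun j => π (MvPolynomial.X j) with ht
    obtain ⟨rT, hrT0, hrT⟩ := ereal_exists_lb Finset.univ (fun j : Fin m => coordPV bs ν (t j))
      (fun j _ => coordPV_ne_bot bs hν _)
    set T := -rT with hT
    have hT0 : 0 ≤ T := by simp [hT]; linarith
    have hrT' : ∀ j : Fin m, ((-T : ℝ) : EReal) ≤ coordPV bs ν (t j) := by
      intro j
      rw [hT, neg_neg]
      exact hrT j (Finset.mem_univ j)
    -- weight lower bound δ
    obtain ⟨δ, hδ0, hδ⟩ : ∃ δ : ℝ, 0 < δ ∧ ∀ i : Fin m, δ ≤ d i := by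
      rcases isEmpty_or_nonempty (Fin m) with hFm | hFm
      · exact ⟨1, one_pos, fun i => (IsEmpty.elim hFm i)⟩
      · obtain ⟨i0, hi0⟩ := Finite.exists_min d
        exact ⟨d i0, hd i0, hi0⟩
    set G := T + E with hG
    have hG0 : 0 ≤ G := add_nonneg hT0 hE0
    set H := (2 * (m : ℝ) + 1) * E with hH
    have hH0 : 0 ≤ H := by positivity
    set c0 := max 1 (G / δ) with hc0def
    have hc01 : 1 ≤ c0 := le_max_left _ _
    have hc0pos : (0 : ℝ) < c0 := lt_of_lt_of_le one_pos hc01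
    -- monomial bound
    have hmono : ∀ k : Fin m →₀ ℕ,
        ((-((∑ j, (k j : ℝ)) * G + H) : ℝ) : EReal) ≤
          coordPV bs ν (π (MvPolynomial.monomial k 1)) := by
      intro k
      have hπm : π (MvPolynomial.monomial k 1) = ∏ j ∈ k.support, t j ^ k j := by
        rw [MvPolynomial.monomial_eq, MvPolynomial.C_1, one_mul, map_finsuppProd]
        simp only [map_pow]
        rfl
      rw [hπm]
      have happ := coordPV_prod bs hν hE1 hEmul k.support (fun j => t j ^ k j)
        (fun j => -((k j : ℝ) * T + ((k j : ℝ) + 1) * E))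
        (fun j _ => coordPV_pow bs hν hE1 hEmul (hrT' j) (k j))
      refine le_trans (EReal.coe_le_coe_iff.mpr ?_) happ
      have hsum : ∑ j ∈ k.support, (k j : ℝ) = ∑ j, (k j : ℝ) := by
        refine Finset.sum_subset (Finset.subset_univ _) ?_
        intro j _ hj
        have : k j = 0 := by simpa [Finsupp.mem_support_iff] using hj
        simp [this]
      have hcard : (k.support.card : ℝ) ≤ (m : ℝ) := by
        have h1 : k.support.card ≤ Fintype.card (Fin m) := Finset.card_le_univ _
        rw [Fintype.card_fin] at h1
        exact_mod_cast h1
      have hexp : ∑ j ∈ k.support, (-((k j : ℝ) * T + ((k j : ℝ) + 1) * E)) =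
          (∑ j ∈ k.support, (k j : ℝ)) * (-(T + E)) + (k.support.card : ℝ) * (-E) := by
        calc ∑ j ∈ k.support, (-((k j : ℝ) * T + ((k j : ℝ) + 1) * E))
            = ∑ j ∈ k.support, ((k j : ℝ) * (-(T + E)) + (-E)) :=
              Finset.sum_congr rfl (fun j _ => by ring)
          _ = _ := by
              rw [Finset.sum_add_distrib, ← Finset.sum_mul, Finset.sum_const, nsmul_eq_mul]
      rw [hexp, hsum]
      have hS0 : 0 ≤ ∑ j, ((k j) : ℝ) := Finset.sum_nonneg fun j _ => by positivity
      have hcard2 : (2 * (k.support.card : ℝ) + 1) * E ≤ (2 * (m : ℝ) + 1) * E :=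
        mul_le_mul_of_nonneg_right (by linarith) hE0
      rw [hG, hH]
      nlinarith [hcard2]
    -- F1 : coordinates of π f dominate c0 · w f − H
    have hF1 : ∀ (f : MvPolynomial (Fin m) A) (l : ι),
        (c0 : EReal) * weightedDegPV ν d f + ((-H : ℝ) : EReal) ≤ ν (bs.repr (π f) l) := by
      intro f l
      by_cases hf0 : f = 0
      · subst hf0
        rw [map_zero]
        have h0 : bs.repr (0 : B) l = 0 := by simp
        rw [h0, hν.1.map_zero]
        exact le_top
      · obtain ⟨s, hs0, hs⟩ := w_real hν hd hf0
        rw [hs, ← EReal.coe_mul]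
        set L : B →ₗ[A] A := (Finsupp.lapply l).comp bs.repr.toLinearMap with hLdef
        have hLy : ∀ y : B, bs.repr y l = L y := fun y => rfl
        have hdec : π f = ∑ k ∈ f.support,
            (MvPolynomial.coeff k f) • π (MvPolynomial.monomial k 1) := by
          conv_lhs => rw [← MvPolynomial.support_sum_monomial_coeff f]
          rw [map_sum]
          refine Finset.sum_congr rfl fun k hk => ?_
          have hsm : (MvPolynomial.monomial k) (MvPolynomial.coeff k f) =
              (MvPolynomial.coeff k f) • (MvPolynomial.monomial k (1 : A)) := by
            rw [MvPolynomial.smul_monomial, smul_eq_mul, mul_one]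
          rw [hsm]
          exact map_smul π.toLinearMap _ _
        rw [hLy, hdec, map_sum]
        refine nu_sum hν _ _ _ fun k hk => ?_
        rw [map_smul, smul_eq_mul]
        have hck : MvPolynomial.coeff k f ≠ 0 := MvPolynomial.mem_support_iff.mp hk
        have hnu_ne_top : ν (MvPolynomial.coeff k f) ≠ ⊤ := by
          intro h
          have h2 := hν.2.2 _ hck
          rw [h] at h2
          simp at h2
        have hu := EReal.coe_toReal hnu_ne_top (hν.2.1 _)
        set u := (ν (MvPolynomial.coeff k f)).toReal with hudef
        have hsu : s ≤ u - wtOf d k := by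
          have hwle := w_le (ν := ν) (d := d) f k
          rw [hs, ← hu, ← EReal.coe_sub] at hwle
          exact_mod_cast hwle
        have hu0 : u ≤ 0 := by
          have h2 := hν.2.2 _ hck
          rw [← hu] at h2
          exact_mod_cast h2
        have hLm : ((-((∑ j, (k j : ℝ)) * G + H) : ℝ) : EReal) ≤
            ν (L (π (MvPolynomial.monomial k 1))) := by
          refine le_trans (hmono k) ?_
          rw [← hLy]
          exact coordPV_le bs _ l
        calc ((c0 * s : ℝ) : EReal) + ((-H : ℝ) : EReal)
            = ((c0 * s + -H : ℝ) : EReal) := (EReal.coe_add _ _).symm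
          _ ≤ ((u + -((∑ j, (k j : ℝ)) * G + H) : ℝ) : EReal) := by
              rw [EReal.coe_le_coe_iff]
              have hwt : δ * (∑ j, (k j : ℝ)) ≤ wtOf d k := by
                rw [wtOf, Finset.mul_sum]
                refine Finset.sum_le_sum fun j _ => ?_
                rw [mul_comm]
                exact mul_le_mul_of_nonneg_left (hδ j) (by positivity)
              have hwt0 : 0 ≤ wtOf d k := wt_nonneg hd k
              have hS0 : 0 ≤ ∑ j, ((k j) : ℝ) := Finset.sum_nonneg fun j _ => by positivity
              have h1 : c0 * s ≤ c0 * (u - wtOf d k) :=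
                mul_le_mul_of_nonneg_left hsu (by linarith)
              have h2 : G * (∑ j, (k j : ℝ)) ≤ c0 * wtOf d k := by
                calc G * (∑ j, (k j : ℝ)) = (G / δ) * (δ * (∑ j, (k j : ℝ))) := by
                      field_simp
                  _ ≤ (G / δ) * wtOf d k :=
                      mul_le_mul_of_nonneg_left hwt (div_nonneg hG0 hδ0.le)
                  _ ≤ c0 * wtOf d k := mul_le_mul_of_nonneg_right (le_max_right _ _) hwt0
              have h3 : (c0 - 1) * u ≤ 0 :=
                mul_nonpos_of_nonneg_of_nonpos (by linarith) hu0
              nlinarith [h1, h2, h3]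
          _ = (u : EReal) + ((-((∑ j, (k j : ℝ)) * G + H) : ℝ) : EReal) := EReal.coe_add _ _
          _ ≤ ν (MvPolynomial.coeff k f) + ν (L (π (MvPolynomial.monomial k 1))) :=
              add_le_add (le_of_eq hu) hLm
          _ ≤ _ := nu_mul hν _ _
    -- consequence: μ y ≤ (coordPV y + H)/c0
    have hmuP_of_mu : ∀ y : B, y ≠ 0 → ∀ Py : ℝ, coordPV bs ν y = ((Py : ℝ) : EReal) →
        μ y ≤ (((Py + H) / c0 : ℝ) : EReal) := by
      intro y hy Py hPy
      refine mu_le y _ fun f hf => ?_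
      have hf0 : f ≠ 0 := by
        rintro rfl
        rw [map_zero] at hf
        exact hy hf.symm
      obtain ⟨s, hs0, hs⟩ := w_real hν hd hf0
      rw [hs, EReal.coe_le_coe_iff]
      have h1 : ((c0 * s - H : ℝ) : EReal) ≤ coordPV bs ν y := by
        refine le_coordPV bs fun l => ?_
        have h2 := hF1 f l
        rw [hf, hs, ← EReal.coe_mul] at h2
        refine le_trans (le_of_eq ?_) h2
        rw [← EReal.coe_add, sub_eq_add_neg]
      rw [hPy, EReal.coe_le_coe_iff] at h1
      rw [le_div_iff₀ hc0pos]
      linarith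
    -- F2 : μ' ≤ μ + d1
    obtain ⟨gpre, hgpre⟩ : ∃ g : ι → MvPolynomial (Fin m) A, ∀ i, π (g i) = bs i := by
      choose g hg using fun i => hπ (bs i)
      exact ⟨g, hg⟩
    obtain ⟨rd, hrd0, hrd⟩ := ereal_exists_lb Finset.univ
      (fun i : ι => weightedDegPV ν d (gpre i))
      (fun i _ => by
        try dsimp only
        obtain ⟨r, _, hr⟩ := w_lb (d := d) hν (gpre i)
        intro h
        rw [h] at hr
        exact EReal.coe_ne_bot r (le_bot_iff.mp hr))
    set d1 := -rd with hd1def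
    have hd10 : 0 ≤ d1 := by simp [hd1def]; linarith
    have hF2 : ∀ y : B, coordPV bs ν y + ((-d1 : ℝ) : EReal) ≤ μ y := by
      intro y
      have hfdef : π (∑ i : ι, MvPolynomial.C (bs.repr y i) * gpre i) = y := by
        rw [map_sum]
        conv_rhs => rw [← Module.Basis.sum_repr bs y]
        refine Finset.sum_congr rfl fun i _ => ?_
        rw [map_mul, hgpre]
        have hC : π (MvPolynomial.C (bs.repr y i)) = algebraMap A B (bs.repr y i) := by
          rw [← MvPolynomial.algebraMap_eq]
          exact π.commutes _
        rw [hC, ← Algebra.smul_def]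
      refine le_trans ?_ (mu_ge _ y hfdef)
      refine w_sum hν _ _ _ fun i _ => ?_
      calc coordPV bs ν y + ((-d1 : ℝ) : EReal)
          ≤ ν (bs.repr y i) + weightedDegPV ν d (gpre i) := by
            refine add_le_add (coordPV_le bs y i) ?_
            have heq : ((-d1 : ℝ) : EReal) = ((rd : ℝ) : EReal) := by
              rw [hd1def, neg_neg]
            rw [heq]
            exact hrd i (Finset.mem_univ i)
        _ ≤ weightedDegPV ν d (MvPolynomial.C (bs.repr y i)) + weightedDegPV ν d (gpre i) :=
            add_le_add_left (w_C_ge hν _) _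
        _ ≤ _ := w_mul hν _ _
    -- the annihilating relation a·1 = b·c
    obtain ⟨a, ha0, c, hac⟩ := exists_ann (A := A) (B := B) hb
    obtain ⟨Ca0, Da, hCa0, hDa0, hlocA⟩ := hloc a ha0
    set Ca := min Ca0 1 with hCadef
    have hCa_pos : 0 < Ca := lt_min hCa0 one_pos
    have hCa1 : Ca ≤ 1 := min_le_right _ _
    have hlocA' : ∀ (n : ℕ) (u : A),
        ν (a ^ n * u) ≤ (Ca : EReal) * ν u + (((n : ℝ) * Da : ℝ) : EReal) := by
      intro n u
      refine le_trans (hlocA n u) (add_le_add_left ?_ _)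
      by_cases hu : u = 0
      · rw [hu, hν.1.map_zero, EReal.coe_mul_top_of_pos hCa0, EReal.coe_mul_top_of_pos hCa_pos]
      · have hnt : ν u ≠ ⊤ := by
          intro h
          have h2 := hν.2.2 u hu
          rw [h] at h2
          simp at h2
        have hco := EReal.coe_toReal hnt (hν.2.1 u)
        have hsu0 : (ν u).toReal ≤ 0 := by
          have h2 := hν.2.2 u hu
          rw [← hco] at h2
          exact_mod_cast h2
        rw [← hco, ← EReal.coe_mul, ← EReal.coe_mul, EReal.coe_le_coe_iff]
        nlinarith [min_le_left Ca0 1]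
    have halgMap_ne : ∀ k : ℕ, algebraMap A B (a ^ k) ≠ 0 := by
      intro k h
      have hsm : (a ^ k) • (1 : B) = 0 := by
        rw [Algebra.smul_def, mul_one]
        exact h
      exact (smul_ne_zero (pow_ne_zero k ha0) (one_ne_zero)) hsm
    have hcne : c ≠ 0 := by
      intro h
      apply halgMap_ne 1
      rw [pow_one, hac, h, mul_zero]
    have hcn_ne : ∀ k : ℕ, c ^ k ≠ 0 := by
      intro k h
      apply halgMap_ne k
      rw [map_pow, hac, mul_pow, h, mul_zero]
    obtain ⟨γ, hγ0, hγ⟩ := coordPV_real bs hν hcne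
    -- final constants
    refine ⟨Ca / c0, (Ca * d1 + H + Da + -γ + 3 * E) / c0,
      div_pos hCa_pos hc0pos, ?_, ?_⟩
    · refine div_nonneg ?_ hc0pos.le
      have hCad1 : 0 ≤ Ca * d1 := mul_nonneg hCa_pos.le hd10
      linarith
    intro n x
    by_cases hx0 : x = 0
    · subst hx0
      rw [mul_zero, mu_zero, EReal.coe_mul_top_of_pos (div_pos hCa_pos hc0pos),
        EReal.top_add_of_ne_bot (EReal.coe_ne_bot _)]
    · cases n with
      | zero =>
        rw [pow_zero, one_mul]
        obtain ⟨Mx, hMx0, hMx⟩ := mu_real x hx0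
        rw [hMx, Nat.cast_zero, zero_mul, EReal.coe_zero, add_zero, ← EReal.coe_mul,
          EReal.coe_le_coe_iff]
        have hle1 : Ca / c0 ≤ 1 := by
          rw [div_le_one hc0pos]
          linarith
        nlinarith [div_pos hCa_pos hc0pos]
      | succ n =>
        have hbnz : (b ^ (n + 1)) ∈ nonZeroDivisors B := pow_mem hb (n + 1)
        have hbn : b ^ (n + 1) * x ≠ 0 := by
          intro h
          exact hx0 ((mem_nonZeroDivisors_iff_right.mp hbnz) x (by rwa [mul_comm]))
        have hax : algebraMap A B (a ^ (n + 1)) * x ≠ 0 := by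
          intro h
          rw [← Algebra.smul_def] at h
          exact (smul_ne_zero (pow_ne_zero _ ha0) hx0) h
        have hkey : algebraMap A B (a ^ (n + 1)) * x = c ^ (n + 1) * (b ^ (n + 1) * x) := by
          rw [map_pow, hac, mul_pow]
          ring
        obtain ⟨P, hP0, hP⟩ := coordPV_real bs hν hbn
        obtain ⟨Q, hQ0, hQ⟩ := coordPV_real bs hν hx0
        obtain ⟨Qa, hQa0, hQa⟩ := coordPV_real bs hν hax
        obtain ⟨Rc, hRc0, hRc⟩ := coordPV_real bs hν (hcn_ne (n + 1))
        obtain ⟨Mx, hMx0, hMx⟩ := mu_real x hx0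
        have hi : Rc + P + -E ≤ Qa := by
          have h1 := hEmul (c ^ (n + 1)) (b ^ (n + 1) * x)
          rw [← hkey, hRc, hP, hQa, ← EReal.coe_add, ← EReal.coe_add,
            EReal.coe_le_coe_iff] at h1
          linarith
        have hii : ((n : ℝ) + 1) * γ - (((n : ℝ) + 1) + 1) * E ≤ Rc := by
          have hyc : ((-(-γ) : ℝ) : EReal) ≤ coordPV bs ν c := by
            rw [neg_neg, ← hγ]
          have h1 := coordPV_pow bs hν hE1 hEmul hyc (n + 1)
          rw [hRc, EReal.coe_le_coe_iff] at h1
          push_cast at h1 ⊢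
          linarith
        have hiii : Qa ≤ Ca * Q + ((n : ℝ) + 1) * Da := by
          obtain ⟨i0, hi0⟩ := ereal_iInf_attained (fun i => ν (bs.repr x i))
          have hrepr : bs.repr (algebraMap A B (a ^ (n + 1)) * x) i0 =
              a ^ (n + 1) * bs.repr x i0 := by
            rw [← Algebra.smul_def, map_smul, Finsupp.smul_apply, smul_eq_mul]
          have h1 : coordPV bs ν (algebraMap A B (a ^ (n + 1)) * x) ≤
              ν (a ^ (n + 1) * bs.repr x i0) := by
            rw [← hrepr]
            exact coordPV_le bs _ i0
          have h3 : ν (bs.repr x i0) = ((Q : ℝ) : EReal) := by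
            rw [← hi0]
            exact hQ
          have h2 := hlocA' (n + 1) (bs.repr x i0)
          rw [h3, ← EReal.coe_mul, ← EReal.coe_add] at h2
          have h4 := le_trans h1 h2
          rw [hQa, EReal.coe_le_coe_iff] at h4
          push_cast at h4 ⊢
          linarith
        have hiv : μ (b ^ (n + 1) * x) ≤ (((P + H) / c0 : ℝ) : EReal) :=
          hmuP_of_mu _ hbn P hP
        have hv : Q ≤ Mx + d1 := by
          have h1 := hF2 x
          rw [hQ, hMx, ← EReal.coe_add, EReal.coe_le_coe_iff] at h1
          linarith
        refine le_trans hiv ?_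
        rw [hMx, ← EReal.coe_mul, ← EReal.coe_add, EReal.coe_le_coe_iff]
        push_cast
        have hvC : Ca * Q ≤ Ca * (Mx + d1) := mul_le_mul_of_nonneg_left hv hCa_pos.le
        have hn0 : (0 : ℝ) ≤ (n : ℝ) := Nat.cast_nonneg n
        have key : P + H ≤ Ca * Mx + ((n : ℝ) + 1) * (Ca * d1 + H + Da + -γ + 3 * E) := by
          nlinarith [mul_nonneg hn0 (mul_nonneg hCa_pos.le hd10), mul_nonneg hn0 hH0,
            mul_nonneg hn0 hE0]
        have h2 : (Ca * Mx + ((n : ℝ) + 1) * (Ca * d1 + H + Da + -γ + 3 * E)) / c0 =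
            Ca / c0 * Mx + ((n : ℝ) + 1) * ((Ca * d1 + H + Da + -γ + 3 * E) / c0) := by
          ring
        rw [← h2]
        gcongr
end
end
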